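/- arXiv:2409.09624 — 13 statements merged into one kernel-verified Lean document; each statement's English description precedes it below -/
import Mathlib

section
/- Let Λ₀ > 1 and Λ₁, …, Λ_{p-1} ≥ 0 be real numbers. Define g₁(r) = Λ₀·(1 - Λ₀·r)/(Λ₀ - r) - Σ_{k=1}^{p-1} (k+1)·Λ_k·r^k. Then g₁ is strictly decreasing on [0,1], and there exists a unique ρ₁ ∈ (0, 1/Λ₀] with g₁(ρ₁) = 0. -/
theorem stmt0 (p : ℕ) (hp : 0 < p) (Λ : ℕ → ℝ) (hΛ0 : 1 < Λ 0)
    (hΛ : ∀ k ∈ Finset.Icc 1 (p - 1), 0 ≤ Λ k)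
    (g₁ : ℝ → ℝ)
    (hg₁ : ∀ r, g₁ r = Λ 0 * (1 - Λ 0 * r) / (Λ 0 - r)
      - ∑ k ∈ Finset.Icc 1 (p - 1), ((k : ℝ) + 1) * Λ k * r ^ k) :
    StrictAntiOn g₁ (Set.Icc 0 1) ∧
    ∃! ρ₁ : ℝ, ρ₁ ∈ Set.Ioc 0 (1 / Λ 0) ∧ g₁ ρ₁ = 0 := by
  have hΛ0pos : (0:ℝ) < Λ 0 := lt_trans one_pos hΛ0
  have hinv : 1 / Λ 0 < 1 := by rw [div_lt_one hΛ0pos]; exact hΛ0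
  have hinvpos : 0 < 1 / Λ 0 := by positivity
  have hanti : StrictAntiOn g₁ (Set.Icc 0 1) := by
    intro a ha b hb hab
    rw [hg₁ a, hg₁ b]
    have hda : 0 < Λ 0 - a := by have := ha.2; linarith
    have hdb : 0 < Λ 0 - b := by have := hb.2; linarith
    have hsum : ∑ k ∈ Finset.Icc 1 (p - 1), ((k : ℝ) + 1) * Λ k * a ^ k
        ≤ ∑ k ∈ Finset.Icc 1 (p - 1), ((k : ℝ) + 1) * Λ k * b ^ k := by
      apply Finset.sum_le_sum
      intro k hk
      have hk0 : 0 ≤ Λ k := hΛ k hk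
      have hpow : a ^ k ≤ b ^ k := pow_le_pow_left₀ ha.1 hab.le k
      have hc : 0 ≤ ((k : ℝ) + 1) * Λ k := by positivity
      exact mul_le_mul_of_nonneg_left hpow hc
    have hfrac : Λ 0 * (1 - Λ 0 * b) / (Λ 0 - b) < Λ 0 * (1 - Λ 0 * a) / (Λ 0 - a) := by
      rw [div_lt_div_iff₀ hdb hda]
      nlinarith [mul_pos hΛ0pos (mul_pos (sub_pos.mpr hab) (show (0:ℝ) < Λ 0 * Λ 0 - 1 by nlinarith))]
    linarith
  refine ⟨hanti, ?_⟩
  have hg0 : g₁ 0 = 1 := by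
    rw [hg₁ 0]
    have hs : ∑ k ∈ Finset.Icc 1 (p - 1), ((k : ℝ) + 1) * Λ k * (0:ℝ) ^ k = 0 := by
      apply Finset.sum_eq_zero
      intro k hk
      have : k ≠ 0 := by
        have := (Finset.mem_Icc.mp hk).1; omega
      rw [zero_pow this]; ring
    rw [hs]
    simp only [mul_zero, sub_zero, mul_one]; exact div_self hΛ0pos.ne'
  have hginv : g₁ (1 / Λ 0) ≤ 0 := by
    rw [hg₁ (1 / Λ 0)]
    have h1 : 1 - Λ 0 * (1 / Λ 0) = 0 := by field_simp; ring
    rw [h1]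
    have hs : 0 ≤ ∑ k ∈ Finset.Icc 1 (p - 1), ((k : ℝ) + 1) * Λ k * (1 / Λ 0) ^ k := by
      apply Finset.sum_nonneg
      intro k hk
      have hk0 : 0 ≤ Λ k := hΛ k hk
      have : (0:ℝ) ≤ (1 / Λ 0) ^ k := by positivity
      positivity
    simp only [mul_zero, zero_div]
    linarith
  have hcont : ContinuousOn g₁ (Set.Icc 0 (1 / Λ 0)) := by
    have hc : ContinuousOn (fun r => Λ 0 * (1 - Λ 0 * r) / (Λ 0 - r)
        - ∑ k ∈ Finset.Icc 1 (p - 1), ((k : ℝ) + 1) * Λ k * r ^ k)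
        (Set.Icc 0 (1 / Λ 0)) := by
      apply ContinuousOn.sub
      · apply ContinuousOn.div
        · fun_prop
        · fun_prop
        · intro x hx
          have hx1 : x < 1 := lt_of_le_of_lt hx.2 hinv
          have : x < Λ 0 := lt_trans hx1 hΛ0
          exact sub_ne_zero.mpr this.ne'
      · fun_prop
    exact hc.congr (fun r _ => hg₁ r)
  have hivt := intermediate_value_Icc' (le_of_lt hinvpos) hcont
  have h0mem : (0:ℝ) ∈ Set.Icc (g₁ (1 / Λ 0)) (g₁ 0) := ⟨hginv, by rw [hg0]; norm_num⟩
  obtain ⟨ρ, hρmem, hρeq⟩ := hivt h0mem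
  have hρpos : 0 < ρ := by
    rcases lt_or_eq_of_le hρmem.1 with h | h
    · exact h
    · exfalso; rw [← h] at hρeq; rw [hg0] at hρeq; norm_num at hρeq
  refine ⟨ρ, ⟨⟨hρpos, hρmem.2⟩, hρeq⟩, ?_⟩
  intro y ⟨hymem, hyeq⟩
  have hy1 : y ∈ Set.Icc (0:ℝ) 1 := ⟨hymem.1.le, le_trans hymem.2 hinv.le⟩
  have hρ1 : ρ ∈ Set.Icc (0:ℝ) 1 := ⟨hρmem.1, le_trans hρmem.2 hinv.le⟩
  exact hanti.injOn hy1 hρ1 (by rw [hyeq, hρeq])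
end

section
/- Let Λ > 1 and M₁, …, M_{p-1} > 1 be real numbers. Define g₃(r) = Λ(1 - Λr)/(Λ - r) - Σ_{k=1}^{p-1} (M_k - 1/M_k) · r^{k+1}(2 - r + k(1-r))/(1-r)² - Σ_{k=1}^{p-1} (k+1) r^k for r ∈ [0,1). Then g₃ is strictly decreasing on [0,1) and there exists a unique ρ₄ ∈ (0,1) with g₃(ρ₄) = 0. -/
theorem stmt2 (p : ℕ) (hp : 0 < p) (Λ : ℝ) (hΛ : 1 < Λ) (M : ℕ → ℝ)
    (hM : ∀ k ∈ Finset.Icc 1 (p - 1), 1 < M k)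
    (g₃ : ℝ → ℝ)
    (hg₃ : ∀ r, g₃ r = Λ * (1 - Λ * r) / (Λ - r)
      - ∑ k ∈ Finset.Icc 1 (p - 1),
          (M k - 1 / M k) * (r ^ (k + 1) * (2 - r + (k : ℝ) * (1 - r)) / (1 - r) ^ 2)
      - ∑ k ∈ Finset.Icc 1 (p - 1), ((k : ℝ) + 1) * r ^ k) :
    StrictAntiOn g₃ (Set.Ico 0 1) ∧
    ∃! ρ₄ : ℝ, ρ₄ ∈ Set.Ioo 0 1 ∧ g₃ ρ₄ = 0 := by
  have hΛ0 : (0:ℝ) < Λ := by linarith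
  have hanti : StrictAntiOn g₃ (Set.Ico 0 1) := by
    intro a ha b hb hab
    obtain ⟨ha0, ha1⟩ := ha
    obtain ⟨hb0, hb1⟩ := hb
    rw [hg₃, hg₃]
    have hΛa : 0 < Λ - a := by linarith
    have hΛb : 0 < Λ - b := by linarith
    have h1a : (0:ℝ) < 1 - a := by linarith
    have h1b : (0:ℝ) < 1 - b := by linarith
    have h1 : Λ * (1 - Λ * b) / (Λ - b) < Λ * (1 - Λ * a) / (Λ - a) := by
      rw [div_lt_div_iff₀ hΛb hΛa]
      nlinarith [mul_pos (sub_pos.2 hab) (show (0:ℝ) < Λ * Λ - 1 by nlinarith)]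
    have hsplit : ∀ r : ℝ, r < 1 → ∀ k : ℕ,
        r ^ (k + 1) * (2 - r + (k : ℝ) * (1 - r)) / (1 - r) ^ 2
          = ((k:ℝ) + 1) * (r ^ (k+1) / (1 - r)) + r ^ (k+1) / (1 - r) ^ 2 := by
      intro r hr k
      have h : (1:ℝ) - r ≠ 0 := by linarith
      field_simp
      ring
    have h2 : ∑ k ∈ Finset.Icc 1 (p - 1),
            (M k - 1 / M k) * (a ^ (k + 1) * (2 - a + (k : ℝ) * (1 - a)) / (1 - a) ^ 2)
        ≤ ∑ k ∈ Finset.Icc 1 (p - 1),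
            (M k - 1 / M k) * (b ^ (k + 1) * (2 - b + (k : ℝ) * (1 - b)) / (1 - b) ^ 2) := by
      apply Finset.sum_le_sum
      intro k hk
      have hMk := hM k hk
      have hc : 0 ≤ M k - 1 / M k := by
        have : 1 / M k ≤ 1 := by rw [div_le_one (by linarith)]; linarith
        linarith
      rw [hsplit a ha1 k, hsplit b hb1 k]
      have hpow : a ^ (k+1) ≤ b ^ (k+1) := pow_le_pow_left₀ ha0 hab.le _
      have hd1 : a ^ (k+1) / (1 - a) ≤ b ^ (k+1) / (1 - b) :=
        div_le_div₀ (by positivity) hpow h1b (by linarith)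
      have hd2 : a ^ (k+1) / (1 - a) ^ 2 ≤ b ^ (k+1) / (1 - b) ^ 2 :=
        div_le_div₀ (by positivity) hpow (by positivity) (by nlinarith)
      have hk0 : (0:ℝ) ≤ (k:ℝ) + 1 := by positivity
      nlinarith [mul_le_mul_of_nonneg_left hd1 hk0]
    have h3 : ∑ k ∈ Finset.Icc 1 (p - 1), ((k : ℝ) + 1) * a ^ k
        ≤ ∑ k ∈ Finset.Icc 1 (p - 1), ((k : ℝ) + 1) * b ^ k := by
      apply Finset.sum_le_sum
      intro k _
      have := pow_le_pow_left₀ ha0 hab.le k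
      nlinarith [pow_le_pow_left₀ ha0 hab.le k]
    linarith
  refine ⟨hanti, ?_⟩
  -- existence via IVT on [0, 1/Λ]
  have hr0 : (0:ℝ) < 1/Λ := by positivity
  have hr1 : 1/Λ < 1 := by rw [div_lt_one hΛ0]; exact hΛ
  have hg0 : g₃ 0 = 1 := by
    rw [hg₃]
    have e1 : ∑ k ∈ Finset.Icc 1 (p - 1),
        (M k - 1 / M k) * ((0:ℝ) ^ (k + 1) * (2 - 0 + (k : ℝ) * (1 - 0)) / (1 - 0) ^ 2) = 0 := by
      apply Finset.sum_eq_zero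
      intro k hk
      rw [zero_pow (by omega)]
      ring
    have e2 : ∑ k ∈ Finset.Icc 1 (p - 1), ((k : ℝ) + 1) * (0:ℝ) ^ k = 0 := by
      apply Finset.sum_eq_zero
      intro k hk
      have hk1 : 1 ≤ k := (Finset.mem_Icc.1 hk).1
      rw [zero_pow (by omega)]
      ring
    rw [e1, e2]
    simp only [mul_zero, sub_zero, mul_one]
    exact div_self hΛ0.ne'
  have hgρ : g₃ (1/Λ) ≤ 0 := by
    rw [hg₃]
    have e1 : Λ * (1 - Λ * (1/Λ)) / (Λ - 1/Λ) = 0 := by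
      rw [mul_one_div_cancel hΛ0.ne']
      simp
    rw [e1]
    have s1 : 0 ≤ ∑ k ∈ Finset.Icc 1 (p - 1),
        (M k - 1 / M k) * ((1/Λ) ^ (k + 1) * (2 - 1/Λ + (k : ℝ) * (1 - 1/Λ)) / (1 - 1/Λ) ^ 2) := by
      apply Finset.sum_nonneg
      intro k hk
      have hMk := hM k hk
      have hc : 0 ≤ M k - 1 / M k := by
        have : 1 / M k ≤ 1 := by rw [div_le_one (by linarith)]; linarith
        linarith
      have h1 : (0:ℝ) ≤ 2 - 1/Λ + (k : ℝ) * (1 - 1/Λ) := by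
        have : (0:ℝ) ≤ (k:ℝ) := Nat.cast_nonneg k
        nlinarith
      have h2 : (0:ℝ) ≤ (1/Λ) ^ (k+1) := by positivity
      have h3 : (0:ℝ) < (1 - 1/Λ) ^ 2 := by
        have : (0:ℝ) < 1 - 1/Λ := by linarith
        positivity
      positivity
    have s2 : 0 ≤ ∑ k ∈ Finset.Icc 1 (p - 1), ((k : ℝ) + 1) * (1/Λ) ^ k := by
      apply Finset.sum_nonneg
      intro k _
      positivity
    linarith
  have hcont : ContinuousOn g₃ (Set.Icc 0 (1/Λ)) := by
    have hfe : g₃ = fun r => Λ * (1 - Λ * r) / (Λ - r)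
      - ∑ k ∈ Finset.Icc 1 (p - 1),
          (M k - 1 / M k) * (r ^ (k + 1) * (2 - r + (k : ℝ) * (1 - r)) / (1 - r) ^ 2)
      - ∑ k ∈ Finset.Icc 1 (p - 1), ((k : ℝ) + 1) * r ^ k := funext hg₃
    rw [hfe]
    have hne1 : ∀ r ∈ Set.Icc (0:ℝ) (1/Λ), Λ - r ≠ 0 := by
      intro r hr; have := hr.2; nlinarith [hr.1]
    have hne2 : ∀ r ∈ Set.Icc (0:ℝ) (1/Λ), (1 - r) ^ 2 ≠ 0 := by
      intro r hr
      have h : (0:ℝ) < 1 - r := by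
        have := lt_of_le_of_lt hr.2 hr1; linarith
      exact (pow_pos h 2).ne'
    apply ContinuousOn.sub
    apply ContinuousOn.sub
    · exact ContinuousOn.div (by fun_prop) (by fun_prop) hne1
    · apply continuousOn_finset_sum
      intro k _
      exact ContinuousOn.mul continuousOn_const
        (ContinuousOn.div (by fun_prop) (by fun_prop) hne2)
    · exact (continuousOn_finset_sum _ (fun k _ => by fun_prop))
  have hiv := intermediate_value_Icc' (le_of_lt hr0) hcont
  have h0mem : (0:ℝ) ∈ Set.Icc (g₃ (1/Λ)) (g₃ 0) := ⟨hgρ, by rw [hg0]; norm_num⟩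
  obtain ⟨c, hc, hgc⟩ := hiv h0mem
  have hc1 : c < 1 := lt_of_le_of_lt hc.2 hr1
  have hc0 : 0 < c := by
    rcases lt_or_eq_of_le hc.1 with h | h
    · exact h
    · exfalso; rw [← h] at hgc; rw [hg0] at hgc; norm_num at hgc
  refine ⟨c, ⟨⟨hc0, hc1⟩, hgc⟩, ?_⟩
  intro y ⟨hy, hgy⟩
  have hinj := hanti.injOn
  exact hinj ⟨hy.1.le, hy.2⟩ ⟨hc0.le, hc1⟩ (by rw [hgy, hgc])
end

section
/- Let H be analytic on the unit disk U with |H'(0)| = 1 and |H'(z)| < Λ for all z ∈ U, where Λ > 1. Then for all z₁, z₂ in the disk U_r = {|z| < r} with 0 < r < 1, one has |H(z₁) - H(z₂)| ≥ Λ·(1 - Λr)/(Λ - r)·|z₁ - z₂|. -/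
open Complex Metric Set


theorem lemA (Λ r s x : ℝ) (hΛ : 1 < Λ) (hr0 : 0 < r) (hrΛ : Λ * r < 1)
    (hx : 0 ≤ x) (hsx : Λ * s ≤ x)
    (h1 : x^2 * (Λ^2 - r^2) + 1 - r^2 * Λ^2 ≤ 2 * (1 - r^2) * Λ^2 * s) :
    (1 - Λ * r) / (Λ * (Λ - r)) ≤ s := by
  have hΛr : 0 < Λ - r := by nlinarith
  have hr1 : r < 1 := by nlinarith
  have hrΛ2 : r^2 * Λ^2 < 1 := by nlinarith [mul_pos hr0 (lt_trans one_pos hΛ)]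
  have hΛ2r2 : 0 < Λ^2 - r^2 := by nlinarith
  have coef : 0 < 2*(1-r^2)*Λ^2 := by nlinarith
  have h2 : 0 < 2*(1-r^2)*Λ^2*s := by nlinarith [mul_nonneg (sq_nonneg x) hΛ2r2.le]
  have hs0 : 0 < s := by
    by_contra h
    push_neg at h
    nlinarith [mul_nonneg coef.le (neg_nonneg.mpr h)]
  have hx2 : Λ^2 * s^2 ≤ x^2 := by nlinarith [mul_le_mul hsx hsx (by positivity) hx]
  have hq : Λ^2*(Λ^2-r^2)*s^2 - 2*(1-r^2)*Λ^2*s + (1-r^2*Λ^2) ≤ 0 := by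
    nlinarith [mul_le_mul_of_nonneg_right hx2 hΛ2r2.le]
  rw [div_le_iff₀ (by positivity)]
  by_contra hc
  push_neg at hc
  have f2 : Λ*(Λ+r)*s*(Λ-r) < (1+Λ*r)*(Λ-r) := by
    nlinarith [mul_lt_mul_of_pos_right hc (show (0:ℝ) < Λ + r by linarith),
      mul_pos hr0 (show (0:ℝ) < Λ^2-1 by nlinarith)]
  have f2' : Λ*(Λ+r)*s < 1+Λ*r := lt_of_mul_lt_mul_right f2 hΛr.le
  nlinarith [mul_pos (by linarith : (0:ℝ) < 1 - Λ*r - s*(Λ*(Λ-r))) (by linarith : (0:ℝ) < 1 + Λ*r - Λ*(Λ+r)*s)]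



theorem lemB (a w : ℂ) (ha : ‖a‖ < 1) (hw : ‖w‖ < 1) :
    ‖(w - a) / (1 - (starRingEnd ℂ) a * w)‖ < 1 := by
  have hkey : Complex.normSq (1 - (starRingEnd ℂ) a * w) - Complex.normSq (w - a)
      = (1 - Complex.normSq a) * (1 - Complex.normSq w) := by
    simp only [Complex.normSq_apply, Complex.sub_re, Complex.sub_im, Complex.mul_re,
      Complex.mul_im, Complex.one_re, Complex.one_im, Complex.conj_re, Complex.conj_im]
    ring
  have ha2 : Complex.normSq a < 1 := by
    rw [Complex.normSq_eq_norm_sq]; nlinarith [norm_nonneg a]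
  have hw2 : Complex.normSq w < 1 := by
    rw [Complex.normSq_eq_norm_sq]; nlinarith [norm_nonneg w]
  have hpos : Complex.normSq (w - a) < Complex.normSq (1 - (starRingEnd ℂ) a * w) := by
    nlinarith
  have hden : (1 - (starRingEnd ℂ) a * w) ≠ 0 := by
    intro h
    rw [h] at hpos
    exact (Complex.normSq_nonneg _).not_gt (by simpa using hpos)
  rw [norm_div, div_lt_one (by simpa [norm_pos_iff] using hden)]
  rw [← Complex.sq_norm, ← Complex.sq_norm] at hpos
  nlinarith [norm_nonneg (w - a), norm_nonneg (1 - (starRingEnd ℂ) a * w)]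

theorem lemC (H : ℂ → ℂ) (Λ : ℝ) (hΛ : 1 < Λ)
    (hH : DifferentiableOn ℂ H (Metric.ball 0 1))
    (hH'0 : ‖deriv H 0‖ = 1)
    (hH' : ∀ z ∈ Metric.ball (0 : ℂ) 1, ‖deriv H z‖ < Λ)
    (r : ℝ) (hr0 : 0 < r) (hrΛ : Λ * r < 1)
    (z : ℂ) (hz : ‖z‖ < r) :
    Λ * (1 - Λ * r) / (Λ - r) ≤ ((starRingEnd ℂ) (deriv H 0) * deriv H z).re := by
  have hΛ0 : (0:ℝ) < Λ := lt_trans one_pos hΛ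
  have hΛne : (Λ:ℂ) ≠ 0 := by
    simpa using (show Λ ≠ 0 by positivity)
  have hr1 : r < 1 := by nlinarith
  have hz1 : z ∈ Metric.ball (0:ℂ) 1 := by
    rw [mem_ball_zero_iff]; linarith
  set c : ℂ := deriv H 0 with hc
  set g : ℂ → ℂ := fun w => deriv H w / Λ with hgdef
  set a : ℂ := c / Λ with hadef
  have hΛnorm : ‖(Λ:ℂ)‖ = Λ := by
    rw [Complex.norm_real, Real.norm_eq_abs, abs_of_pos hΛ0]
  have ha_norm : ‖a‖ = 1 / Λ := by
    rw [hadef, norm_div, hH'0, hΛnorm]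
  have ha1 : ‖a‖ < 1 := by rw [ha_norm]; rw [div_lt_one hΛ0]; exact hΛ
  have hg_lt : ∀ w ∈ Metric.ball (0:ℂ) 1, ‖g w‖ < 1 := by
    intro w hw
    rw [hgdef]
    simp only [norm_div, hΛnorm]
    rw [div_lt_one hΛ0]
    exact hH' w hw
  have hg_diff : DifferentiableOn ℂ g (Metric.ball 0 1) :=
    ((hH.analyticOnNhd isOpen_ball).deriv.differentiableOn).div_const _
  have hden : ∀ w ∈ Metric.ball (0:ℂ) 1, 1 - (starRingEnd ℂ) a * g w ≠ 0 := by
    intro w hw h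
    have h2 : (starRingEnd ℂ) a * g w = 1 := by
      have := sub_eq_zero.mp h; exact this.symm
    have : ‖(starRingEnd ℂ) a * g w‖ < 1 := by
      rw [norm_mul, RCLike.norm_conj, ha_norm]
      calc 1 / Λ * ‖g w‖ < 1/Λ * 1 := by
            apply mul_lt_mul_of_pos_left (hg_lt w hw) (by positivity)
        _ ≤ 1 := by rw [mul_one]; rw [div_le_one hΛ0]; linarith
    rw [h2] at this; simp at this
  set φ : ℂ → ℂ := fun w => (g w - a) / (1 - (starRingEnd ℂ) a * g w) with hφdef
  have hφdiff : DifferentiableOn ℂ φ (Metric.ball 0 1) := by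
    apply DifferentiableOn.div (hg_diff.sub_const a)
      ((differentiableOn_const 1).sub (hg_diff.const_mul _)) hden
  have hφmaps : Set.MapsTo φ (Metric.ball 0 1) (Metric.ball 0 1) := by
    intro w hw
    rw [mem_ball_zero_iff]
    exact lemB a (g w) ha1 (hg_lt w hw)
  have hφ0 : φ 0 = 0 := by
    have : g 0 = a := rfl
    rw [hφdef]; simp only [this, sub_self, zero_div]
  have habs : ‖φ z‖ ≤ ‖z‖ :=
    Complex.norm_le_norm_of_mapsTo_ball hφdiff (hφmaps.mono_right ball_subset_closedBall) hφ0
      (by linarith)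
  have hineq : ‖g z - a‖ ≤ r * ‖1 - (starRingEnd ℂ) a * g z‖ := by
    have hd := hden z hz1
    have h1 : ‖φ z‖ = ‖g z - a‖ / ‖1 - (starRingEnd ℂ) a * g z‖ := by
      rw [hφdef]; exact norm_div _ _
    have h2 : ‖φ z‖ ≤ r := by
      exact habs.trans (by linarith)
    rw [h1, div_le_iff₀ (by simpa [norm_pos_iff] using hd)] at h2
    linarith [h2]
  -- square it
  set s : ℝ := ((starRingEnd ℂ) a * g z).re with hs
  set x : ℝ := ‖g z‖ with hx
  have hsq : Complex.normSq (g z - a) ≤ r^2 * Complex.normSq (1 - (starRingEnd ℂ) a * g z) := by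
    rw [← Complex.sq_norm, ← Complex.sq_norm]
    nlinarith [norm_nonneg (g z - a), norm_nonneg (1 - (starRingEnd ℂ) a * g z), hineq, hr0.le]
  have e1 : Complex.normSq (g z - a) = Complex.normSq (g z) + Complex.normSq a - 2 * s := by
    rw [hs]
    simp only [Complex.normSq_apply, Complex.sub_re, Complex.sub_im, Complex.mul_re,
      Complex.mul_im, Complex.conj_re, Complex.conj_im]
    ring
  have e2 : Complex.normSq (1 - (starRingEnd ℂ) a * g z)
      = 1 - 2 * s + Complex.normSq a * Complex.normSq (g z) := by
    rw [hs]
    simp only [Complex.normSq_apply, Complex.sub_re, Complex.sub_im, Complex.mul_re,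
      Complex.mul_im, Complex.one_re, Complex.one_im, Complex.conj_re, Complex.conj_im]
    ring
  have na : Complex.normSq a = 1 / Λ^2 := by
    rw [← Complex.sq_norm, ha_norm]; field_simp
  have nx : Complex.normSq (g z) = x^2 := by
    rw [← Complex.sq_norm, hx]
  have hsx : Λ * s ≤ x := by
    have h1 : s ≤ ‖(starRingEnd ℂ) a * g z‖ := by
      rw [hs]; exact Complex.re_le_norm _
    rw [norm_mul, RCLike.norm_conj, ha_norm] at h1
    have h2 : Λ * s ≤ Λ * (1/Λ * ‖g z‖) := mul_le_mul_of_nonneg_left h1 hΛ0.le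
    have h3 : Λ * (1/Λ * ‖g z‖) = ‖g z‖ := by field_simp
    rw [hx]; linarith
  have h1 : x^2 * (Λ^2 - r^2) + 1 - r^2 * Λ^2 ≤ 2 * (1 - r^2) * Λ^2 * s := by
    rw [e1, e2, na, nx] at hsq
    have hΛr0 : Λ ≠ 0 := by positivity
    have hΛ2 : (0:ℝ) < Λ^2 := by positivity
    have h := mul_le_mul_of_nonneg_left hsq hΛ2.le
    have hm1 : Λ^2 * (1/Λ^2) = 1 := by field_simp
    have hm2 : r^2*x^2*(Λ^2*(1/Λ^2)) = r^2*x^2 := by field_simp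
    nlinarith [h, hm1, hm2]
  have key := lemA Λ r s x hΛ hr0 hrΛ (norm_nonneg _) hsx h1
  -- convert back
  have hrel : ((starRingEnd ℂ) c * deriv H z).re = Λ^2 * s := by
    have : (starRingEnd ℂ) c * deriv H z = ((Λ:ℂ)^2) * ((starRingEnd ℂ) a * g z) := by
      rw [hadef, hgdef]
      field_simp
      rw [map_div₀, Complex.conj_ofReal, div_eq_mul_inv, mul_comm ((starRingEnd ℂ) c), mul_assoc,
        mul_left_comm (Λ:ℂ), mul_inv_cancel₀ hΛne, mul_one]
    rw [this, hs]
    have : ((Λ:ℂ)^2) = ((Λ^2 : ℝ) : ℂ) := by push_cast; ring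
    rw [this, Complex.re_ofReal_mul]
  rw [hrel]
  have heq : Λ * (1 - Λ * r) / (Λ - r) = Λ^2 * ((1 - Λ * r) / (Λ * (Λ - r))) := by
    have : Λ - r ≠ 0 := by intro h; nlinarith
    field_simp
  rw [heq]
  exact mul_le_mul_of_nonneg_left key (by positivity)

theorem stmt4 (H : ℂ → ℂ) (Λ : ℝ) (hΛ : 1 < Λ)
    (hH : DifferentiableOn ℂ H (Metric.ball 0 1))
    (hH'0 : ‖deriv H 0‖ = 1)
    (hH' : ∀ z ∈ Metric.ball (0 : ℂ) 1, ‖deriv H z‖ < Λ)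
    (r : ℝ) (hr0 : 0 < r) (hr1 : r < 1) :
    ∀ z₁ ∈ Metric.ball (0 : ℂ) r, ∀ z₂ ∈ Metric.ball (0 : ℂ) r,
      Λ * (1 - Λ * r) / (Λ - r) * ‖z₁ - z₂‖ ≤ ‖H z₁ - H z₂‖ := by
  intro z₁ hz₁ z₂ hz₂
  have hΛ0 : (0:ℝ) < Λ := lt_trans one_pos hΛ
  have hΛr : (0:ℝ) < Λ - r := by linarith
  by_cases hrΛ : Λ * r < 1
  case neg =>
    push_neg at hrΛ
    have hle : Λ * (1 - Λ * r) / (Λ - r) ≤ 0 := by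
      apply div_nonpos_of_nonpos_of_nonneg _ hΛr.le
      nlinarith
    calc Λ * (1 - Λ * r) / (Λ - r) * ‖z₁ - z₂‖ ≤ 0 :=
          mul_nonpos_of_nonpos_of_nonneg hle (norm_nonneg _)
      _ ≤ ‖H z₁ - H z₂‖ := norm_nonneg _
  case pos =>
  by_cases huz : z₁ = z₂
  · subst huz; simp
  rw [mem_ball_zero_iff] at hz₁ hz₂
  set m : ℝ := Λ * (1 - Λ * r) / (Λ - r) with hm
  set u : ℂ := z₁ - z₂ with hu
  have hune : u ≠ 0 := sub_ne_zero.2 huz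
  have hun : (0:ℝ) < ‖u‖ := norm_pos_iff.2 hune
  have hunC : ((‖u‖ : ℝ) : ℂ) ≠ 0 := by
    simpa using hun.ne'
  set c : ℂ := deriv H 0 with hc
  set d : ℂ := c * u / (‖u‖ : ℂ) with hd
  have hdnorm : ‖d‖ = 1 := by
    rw [hd, norm_div, norm_mul, hH'0, one_mul, Complex.norm_real, Real.norm_eq_abs,
      abs_of_pos hun, div_self hun.ne']
  set γ : ℝ → ℂ := fun t => z₂ + t • u with hγ
  have hγmem : ∀ t ∈ Icc (0:ℝ) 1, γ t ∈ Metric.ball (0:ℂ) r := by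
    intro t ht
    have h1 := (convex_ball (0:ℂ) r) (mem_ball_zero_iff.2 hz₂) (mem_ball_zero_iff.2 hz₁)
      (by linarith [ht.2] : (0:ℝ) ≤ 1 - t) ht.1 (by ring)
    have h2 : (1 - t) • z₂ + t • z₁ = γ t := by rw [hγ, hu]; module
    rwa [h2] at h1
  set F : ℝ → ℝ := fun t => ((starRingEnd ℂ) d * H (γ t)).re - m * ‖u‖ * t with hF
  have hFderiv : ∀ t ∈ Icc (0:ℝ) 1,
      HasDerivAt F (((starRingEnd ℂ) d * (u • deriv H (γ t))).re - m * ‖u‖) t := by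
    intro t ht
    have hγd : HasDerivAt γ u t := by
      simpa [hγ] using ((hasDerivAt_id t).smul_const u).const_add z₂
    have hmem : γ t ∈ Metric.ball (0:ℂ) 1 :=
      ball_subset_ball hr1.le (hγmem t ht)
    have hHd : HasDerivAt H (deriv H (γ t)) (γ t) :=
      (hH.differentiableAt (isOpen_ball.mem_nhds hmem)).hasDerivAt
    have comp : HasDerivAt (fun s => H (γ s)) (u • deriv H (γ t)) t :=
      hHd.scomp t hγd
    have comp2 : HasDerivAt (fun s => (starRingEnd ℂ) d * H (γ s))
        ((starRingEnd ℂ) d * (u • deriv H (γ t))) t := comp.const_mul _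
    have compRe : HasDerivAt (fun s => ((starRingEnd ℂ) d * H (γ s)).re)
        (((starRingEnd ℂ) d * (u • deriv H (γ t))).re) t :=
      Complex.reCLM.hasFDerivAt.comp_hasDerivAt t comp2
    have lin : HasDerivAt (fun s : ℝ => m * ‖u‖ * s) (m * ‖u‖) t := by
      simpa using (hasDerivAt_id t).const_mul (m * ‖u‖)
    exact compRe.sub lin
  have hkey : ∀ t ∈ Icc (0:ℝ) 1,
      0 ≤ ((starRingEnd ℂ) d * (u • deriv H (γ t))).re - m * ‖u‖ := by
    intro t ht
    have hid : (starRingEnd ℂ) d * (u • deriv H (γ t))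
        = ((‖u‖ : ℝ) : ℂ) * ((starRingEnd ℂ) c * deriv H (γ t)) := by
      rw [hd, smul_eq_mul]
      rw [map_div₀, map_mul, Complex.conj_ofReal]
      have h1 : (starRingEnd ℂ) u * u = ((‖u‖:ℝ):ℂ)^2 := by
        rw [mul_comm, Complex.mul_conj, Complex.normSq_eq_norm_sq]
        push_cast
        ring
      rw [div_mul_eq_mul_div, div_eq_iff hunC]
      linear_combination ((starRingEnd ℂ) c * deriv H (γ t)) * h1
    rw [hid, Complex.re_ofReal_mul]
    have hlem := lemC H Λ hΛ hH hH'0 hH' r hr0 hrΛ (γ t)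
      (mem_ball_zero_iff.1 (hγmem t ht))
    rw [← hc, ← hm] at hlem
    nlinarith [mul_le_mul_of_nonneg_left hlem (norm_nonneg u)]
  have hmono : MonotoneOn F (Icc 0 1) := by
    apply monotoneOn_of_deriv_nonneg (convex_Icc 0 1)
    · exact fun t ht => (hFderiv t ht).continuousAt.continuousWithinAt
    · exact fun t ht =>
        ((hFderiv t (interior_subset ht)).differentiableAt).differentiableWithinAt
    · intro t ht
      rw [(hFderiv t (interior_subset ht)).deriv]
      exact hkey t (interior_subset ht)
  have h01 : F 0 ≤ F 1 :=
    hmono (by constructor <;> norm_num) (by constructor <;> norm_num) zero_le_one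
  have hγ0 : γ 0 = z₂ := by simp [hγ]
  have hγ1 : γ 1 = z₁ := by rw [hγ]; simp [hu]
  rw [hF] at h01
  simp only [hγ0, hγ1, mul_zero, mul_one, sub_zero] at h01
  have h2 : m * ‖u‖ ≤ ((starRingEnd ℂ) d * (H z₁ - H z₂)).re := by
    rw [mul_sub]
    simp only [Complex.sub_re]
    linarith
  have h3 : ((starRingEnd ℂ) d * (H z₁ - H z₂)).re ≤ ‖H z₁ - H z₂‖ := by
    calc ((starRingEnd ℂ) d * (H z₁ - H z₂)).re ≤ ‖(starRingEnd ℂ) d * (H z₁ - H z₂)‖ := by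
          exact Complex.re_le_norm _
      _ = ‖H z₁ - H z₂‖ := by rw [norm_mul, RCLike.norm_conj, hdnorm, one_mul]
  linarith
end

section
/- Suppose H is analytic on the unit disk U with H(0) = 0, |H'(0)| = 1 and |H(z)| < M on U for some M > 0, and write H(z) = Σ_{n≥1} a_n z^n. Then M ≥ 1 and |a_n| ≤ M - 1/M for all n ≥ 2. -/
open Metric Complex Filter

/-- Evaluation of a power series at 0. -/
lemma aux_hasSum_zero (c : ℕ → ℂ) : HasSum (fun k : ℕ => c k * (0:ℂ) ^ k) (c 0) := by
  have h : (fun k : ℕ => c k * (0:ℂ) ^ k) = fun k => if k = 0 then c 0 else 0 := by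
    funext n; rcases eq_or_ne n 0 with h | h <;> simp [h]
  rw [h]; exact hasSum_ite_eq 0 (c 0)

lemma aux_ofScalars_coeff (c : ℕ → ℂ) (n : ℕ) :
    (FormalMultilinearSeries.ofScalars ℂ c).coeff n = c n := by
  simp [FormalMultilinearSeries.coeff, FormalMultilinearSeries.ofScalars, List.prod_ofFn]

/-- A pointwise-convergent power series on the unit ball gives a `HasFPowerSeriesOnBall`. -/
lemma aux_hasFPS (c : ℕ → ℂ) (F : ℂ → ℂ)
    (hc : ∀ z ∈ Metric.ball (0:ℂ) 1, HasSum (fun k : ℕ => c k * z ^ k) (F z)) :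
    HasFPowerSeriesOnBall F (FormalMultilinearSeries.ofScalars ℂ c) 0 1 := by
  have hrad : 1 ≤ (FormalMultilinearSeries.ofScalars ℂ c).radius := by
    refine ENNReal.le_of_forall_nnreal_lt fun r hr => ?_
    have hr1 : (r : ℝ) < 1 := by exact_mod_cast hr
    have hz : ((r : ℝ) : ℂ) ∈ Metric.ball (0:ℂ) 1 := by
      simp only [mem_ball_zero_iff, Complex.norm_real, Real.norm_eq_abs]
      rw [_root_.abs_of_nonneg r.coe_nonneg]; exact hr1
    have hsum := (hc _ hz).summable
    have h0 : Tendsto (fun n => ‖c n * ((r:ℝ):ℂ) ^ n‖) atTop (nhds 0) := by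
      simpa using hsum.tendsto_atTop_zero.norm
    obtain ⟨C, hC⟩ := h0.bddAbove_range
    refine (FormalMultilinearSeries.ofScalars ℂ c).le_radius_of_bound C fun n => ?_
    have : ‖c n * ((r:ℝ):ℂ) ^ n‖ ≤ C := hC (Set.mem_range_self n)
    calc ‖FormalMultilinearSeries.ofScalars ℂ c n‖ * (r:ℝ) ^ n
        = ‖c n‖ * (r:ℝ) ^ n := by rw [FormalMultilinearSeries.ofScalars_norm]
      _ = ‖c n * ((r:ℝ):ℂ) ^ n‖ := by
          rw [norm_mul, norm_pow, Complex.norm_real, Real.norm_eq_abs,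
            _root_.abs_of_nonneg r.coe_nonneg]
      _ ≤ C := this
  refine ⟨hrad, one_pos, fun {y} hy => ?_⟩
  have hy' : y ∈ Metric.ball (0:ℂ) 1 := by
    have : Metric.eball (0:ℂ) ((1:NNReal):ENNReal) = Metric.ball 0 ((1:NNReal):ℝ) :=
      Metric.emetric_ball_nnreal
    simp only [ENNReal.coe_one, NNReal.coe_one] at this
    rw [← this]; simpa using hy
  simpa [FormalMultilinearSeries.ofScalars_apply_eq, smul_eq_mul, mul_comm,
    aux_ofScalars_coeff] using hc y hy'

lemma aux_diffOn (c : ℕ → ℂ) (F : ℂ → ℂ)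
    (hc : ∀ z ∈ Metric.ball (0:ℂ) 1, HasSum (fun k : ℕ => c k * z ^ k) (F z)) :
    DifferentiableOn ℂ F (Metric.ball 0 1) := by
  have h := (aux_hasFPS c F hc).differentiableOn
  have : Metric.eball (0:ℂ) ((1:NNReal):ENNReal) = Metric.ball 0 ((1:NNReal):ℝ) :=
    Metric.emetric_ball_nnreal
  simp only [ENNReal.coe_one, NNReal.coe_one] at this
  rwa [this] at h

/-- Maximum modulus style bound: if `‖z^m * u z‖ ≤ C` on the unit ball then `‖u z‖ ≤ C`. -/
lemma aux_maxmod (u : ℂ → ℂ) (hu : DifferentiableOn ℂ u (Metric.ball 0 1))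
    (C : ℝ) (m : ℕ) (hb : ∀ z : ℂ, ‖z‖ < 1 → ‖z ^ m * u z‖ ≤ C) :
    ∀ z : ℂ, ‖z‖ < 1 → ‖u z‖ ≤ C := by
  intro z hz
  have hr : ∀ r : ℝ, r ∈ Set.Ioo ‖z‖ 1 → ‖u z‖ ≤ C / r ^ m := by
    rintro r ⟨hr1, hr2⟩
    have hr0 : 0 < r := lt_of_le_of_lt (norm_nonneg z) hr1
    have hsub : closure (Metric.ball (0:ℂ) r) ⊆ Metric.ball 0 1 :=
      closure_ball_subset_closedBall.trans (closedBall_subset_ball hr2)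
    have hdc : DiffContOnCl ℂ u (Metric.ball (0:ℂ) r) :=
      (hu.mono hsub).diffContOnCl
    have hfr : ∀ w ∈ frontier (Metric.ball (0:ℂ) r), ‖u w‖ ≤ C / r ^ m := by
      intro w hw
      rw [frontier_ball _ hr0.ne'] at hw
      have hwn : ‖w‖ = r := by simpa [mem_sphere_iff_norm] using hw
      have h1 : ‖w ^ m * u w‖ ≤ C := hb w (by rw [hwn]; exact hr2)
      rw [norm_mul, norm_pow, hwn] at h1
      rw [le_div_iff₀ (pow_pos hr0 m)]
      linarith [h1, mul_comm (r ^ m) ‖u w‖]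
    exact Complex.norm_le_of_forall_mem_frontier_norm_le isBounded_ball hdc hfr
      (subset_closure (mem_ball_zero_iff.2 hr1))
  have hlim : Tendsto (fun r : ℝ => C / r ^ m) (nhdsWithin 1 (Set.Iio 1)) (nhds (C / 1 ^ m)) := by
    refine Tendsto.mono_left ?_ nhdsWithin_le_nhds
    exact (tendsto_const_nhds.div ((continuous_pow m).tendsto 1) (by norm_num))
  have hev : ∀ᶠ r in nhdsWithin (1:ℝ) (Set.Iio 1), ‖u z‖ ≤ C / r ^ m := by
    filter_upwards [Ioo_mem_nhdsLT_of_mem (Set.mem_Ioc.2 ⟨hz, le_rfl⟩)] with r hrr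
    exact hr r hrr
  have := ge_of_tendsto hlim hev
  simpa using this

lemma aux_rootsum (m : ℕ) (hm : 0 < m) (j : ℕ) :
    ∑ k ∈ Finset.range m, (Complex.exp (2 * Real.pi * Complex.I / m)) ^ (k * j)
      = if m ∣ j then (m : ℂ) else 0 := by
  have hprim := Complex.isPrimitiveRoot_exp m hm.ne'
  set ω := Complex.exp (2 * Real.pi * Complex.I / m) with hω
  have hpow : ∀ k : ℕ, ω ^ (k * j) = (ω ^ j) ^ k := fun k => by rw [mul_comm k j, pow_mul]
  simp_rw [hpow]
  by_cases hdvd : m ∣ j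
  · have h1 : ω ^ j = 1 := (hprim.pow_eq_one_iff_dvd j).2 hdvd
    simp [h1, hdvd]
  · have h1 : ω ^ j ≠ 1 := fun h => hdvd ((hprim.pow_eq_one_iff_dvd j).1 h)
    rw [if_neg hdvd, geom_sum_eq h1]
    have h2 : (ω ^ j) ^ m = 1 := by
      rw [← pow_mul, mul_comm j m, pow_mul, hprim.pow_eq_one, one_pow]
    rw [h2]; simp

lemma aux_norm_omega (m : ℕ) (hm : 0 < m) :
    ‖Complex.exp (2 * Real.pi * Complex.I / m)‖ = 1 := by
  have h : (2 * (Real.pi : ℂ) * Complex.I / m) = ((2 * Real.pi / m : ℝ) : ℂ) * Complex.I := by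
    push_cast; ring
  rw [h]
  exact Complex.norm_exp_ofReal_mul_I _

lemma aux_mobius (M : ℝ) (hM1 : 1 ≤ M) (d w : ℂ) (hd : ‖d‖ = 1) (hw : ‖w‖ ≤ M) :
    M * ‖w - d‖ ≤ ‖(M:ℂ)^2 - (starRingEnd ℂ) d * w‖ := by
  have hd2 : d.re ^ 2 + d.im ^ 2 = 1 := by
    have h1 : ‖d‖ ^ 2 = Complex.normSq d := by
      rw [Complex.sq_norm]
    rw [hd, Complex.normSq_apply] at h1
    nlinarith [h1]
  have hw2 : w.re ^ 2 + w.im ^ 2 ≤ M ^ 2 := by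
    have h1 : ‖w‖ ^ 2 = Complex.normSq w := by
      rw [Complex.sq_norm]
    rw [Complex.normSq_apply] at h1
    nlinarith [norm_nonneg w]
  have hsq : (M * ‖w - d‖) ^ 2 ≤ ‖(M:ℂ)^2 - (starRingEnd ℂ) d * w‖ ^ 2 := by
    have e1 : ‖w - d‖ ^ 2 = Complex.normSq (w - d) := by
      rw [Complex.sq_norm]
    have e2 : ‖(M:ℂ)^2 - (starRingEnd ℂ) d * w‖ ^ 2
        = Complex.normSq ((M:ℂ)^2 - (starRingEnd ℂ) d * w) := by
      rw [Complex.sq_norm]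
    have e0 : ((M:ℂ))^2 = ((M^2 : ℝ) : ℂ) := by push_cast; ring
    rw [mul_pow, e1, e2, e0]
    simp only [Complex.normSq_apply, Complex.sub_re, Complex.sub_im, Complex.mul_re,
      Complex.mul_im, Complex.conj_re, Complex.conj_im, Complex.ofReal_re, Complex.ofReal_im]
    have hps : (d.re * w.re + d.im * w.im) ^ 2 + (d.re * w.im - d.im * w.re) ^ 2
        = w.re ^ 2 + w.im ^ 2 := by linear_combination (w.re ^ 2 + w.im ^ 2) * hd2
    have hM2 : 1 ≤ M ^ 2 := by nlinarith
    nlinarith [hps, hw2, hM2, mul_nonneg (sub_nonneg.2 hM2) (sub_nonneg.2 hw2)]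
  have h1 : 0 ≤ M * ‖w - d‖ := by positivity
  exact (pow_le_pow_iff_left₀ h1 (norm_nonneg _) (two_ne_zero)).1 hsq

theorem stmt5 (H : ℂ → ℂ) (M : ℝ) (hM : 0 < M) (a : ℕ → ℂ)
    (hH : DifferentiableOn ℂ H (Metric.ball 0 1))
    (hH0 : H 0 = 0)
    (hH'0 : ‖deriv H 0‖ = 1)
    (hHM : ∀ z ∈ Metric.ball (0 : ℂ) 1, ‖H z‖ < M)
    (ha : ∀ z ∈ Metric.ball (0 : ℂ) 1, HasSum (fun n : ℕ => a n * z ^ n) (H z)) :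
    1 ≤ M ∧ ∀ n, 2 ≤ n → ‖a n‖ ≤ M - 1 / M := by
  have h01 : (0:ℂ) ∈ Metric.ball (0:ℂ) 1 := by simp
  have ha0 : a 0 = 0 := by
    have h1 := ha 0 h01
    rw [hH0] at h1
    exact (aux_hasSum_zero a).unique h1
  set c : ℕ → ℂ := fun k => a (k + 1) with hc
  have hsum_shift : ∀ z ∈ Metric.ball (0:ℂ) 1,
      HasSum (fun k : ℕ => c k * z ^ k * z) (H z) := by
    intro z hz
    have h1 := (hasSum_nat_add_iff' (f := fun n : ℕ => a n * z ^ n) 1).2 (ha z hz)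
    simp only [Finset.sum_range_one, ha0, pow_zero, zero_mul, mul_one, sub_zero] at h1
    have h2 : (fun n : ℕ => a (n + 1) * z ^ (n + 1)) = fun k : ℕ => c k * z ^ k * z := by
      funext k; rw [pow_succ]; ring
    rwa [h2] at h1
  have hsummable : ∀ z ∈ Metric.ball (0:ℂ) 1, Summable (fun k : ℕ => c k * z ^ k) := by
    intro z hz
    rcases eq_or_ne z 0 with rfl | hz0
    · exact (aux_hasSum_zero c).summable
    · refine ((hsum_shift z hz).summable.mul_right z⁻¹).congr fun k => ?_
      field_simp
  set φ : ℂ → ℂ := fun z => ∑' k : ℕ, c k * z ^ k with hφdef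
  have hφsum : ∀ z ∈ Metric.ball (0:ℂ) 1, HasSum (fun k : ℕ => c k * z ^ k) (φ z) :=
    fun z hz => (hsummable z hz).hasSum
  have hHφ : ∀ z ∈ Metric.ball (0:ℂ) 1, H z = z * φ z := by
    intro z hz
    have := (hsum_shift z hz).unique ((hφsum z hz).mul_right z)
    rw [this]; ring
  have hφdiff : DifferentiableOn ℂ φ (Metric.ball 0 1) := aux_diffOn c φ hφsum
  have hφ0 : φ 0 = a 1 := (hφsum 0 h01).unique (aux_hasSum_zero c)
  have hda1 : deriv H 0 = a 1 := by
    have hφat : DifferentiableAt ℂ φ 0 :=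
      (hφdiff.differentiableAt (isOpen_ball.mem_nhds h01))
    have hder : HasDerivAt (fun z : ℂ => z * φ z) (1 * φ 0 + 0 * deriv φ 0) 0 :=
      (hasDerivAt_id 0).mul hφat.hasDerivAt
    have heq : H =ᶠ[nhds (0:ℂ)] fun z : ℂ => z * φ z := by
      filter_upwards [isOpen_ball.mem_nhds h01] with w hw
      exact hHφ w hw
    have := (hder.congr_of_eventuallyEq heq).deriv
    rw [this, hφ0]; ring
  have ha1 : ‖a 1‖ = 1 := by rw [← hda1]; exact hH'0
  have hφM : ∀ z : ℂ, ‖z‖ < 1 → ‖φ z‖ ≤ M := by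
    refine aux_maxmod φ hφdiff M 1 fun z hz => ?_
    rw [pow_one, ← hHφ z (mem_ball_zero_iff.2 hz)]
    exact (hHM z (mem_ball_zero_iff.2 hz)).le
  have hM1 : 1 ≤ M := by
    have := hφM 0 (by norm_num)
    rwa [hφ0, ha1] at this
  refine ⟨hM1, fun n hn => ?_⟩
  set m : ℕ := n - 1 with hmdef
  have hm0 : 0 < m := by omega
  have hmn : m + 1 = n := by omega
  have hmc0 : (m:ℂ) ≠ 0 := Nat.cast_ne_zero.2 hm0.ne'
  set ω : ℂ := Complex.exp (2 * Real.pi * Complex.I / m) with hωdef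
  have hω1 : ‖ω‖ = 1 := aux_norm_omega m hm0
  set g : ℂ → ℂ := fun z => (m:ℂ)⁻¹ * ∑ k ∈ Finset.range m, φ (ω ^ k * z) with hgdef
  set d : ℕ → ℂ := fun j => if m ∣ j then c j else 0 with hddef
  have hmem : ∀ (k : ℕ) (z : ℂ), z ∈ Metric.ball (0:ℂ) 1 →
      ω ^ k * z ∈ Metric.ball (0:ℂ) 1 := by
    intro k z hz
    rw [mem_ball_zero_iff] at hz ⊢
    rw [norm_mul, norm_pow, hω1, one_pow, one_mul]; exact hz
  have hgsum : ∀ z ∈ Metric.ball (0:ℂ) 1, HasSum (fun j : ℕ => d j * z ^ j) (g z) := by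
    intro z hz
    have h1 : ∀ k ∈ Finset.range m,
        HasSum (fun j : ℕ => c j * (ω ^ k * z) ^ j) (φ (ω ^ k * z)) :=
      fun k _ => hφsum _ (hmem k z hz)
    have h2 := (hasSum_sum h1).mul_left (m:ℂ)⁻¹
    have hpt : (fun j : ℕ => (m:ℂ)⁻¹ * ∑ k ∈ Finset.range m, c j * (ω ^ k * z) ^ j)
        = fun j : ℕ => d j * z ^ j := by
      funext j
      have he : ∀ k ∈ Finset.range m,
          c j * (ω ^ k * z) ^ j = ω ^ (k * j) * (c j * z ^ j) := by
        intro k _; rw [mul_pow, pow_mul]; ring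
      rw [Finset.sum_congr rfl he, ← Finset.sum_mul, aux_rootsum m hm0 j]
      by_cases hdvd : m ∣ j
      · rw [if_pos hdvd]; simp only [hddef, if_pos hdvd]; field_simp
      · rw [if_neg hdvd]; simp only [hddef, if_neg hdvd]; ring
    rwa [hpt] at h2
  have hgdiff : DifferentiableOn ℂ g (Metric.ball 0 1) := aux_diffOn d g hgsum
  have hgM : ∀ z ∈ Metric.ball (0:ℂ) 1, ‖g z‖ ≤ M := by
    intro z hz
    have hb : ∀ k ∈ Finset.range m, ‖φ (ω ^ k * z)‖ ≤ M := fun k _ =>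
      hφM _ (mem_ball_zero_iff.1 (hmem k z hz))
    calc ‖g z‖ ≤ ‖(m:ℂ)⁻¹‖ * ∑ k ∈ Finset.range m, ‖φ (ω ^ k * z)‖ := by
          rw [hgdef]; simp only [norm_mul]
          gcongr
          exact norm_sum_le _ _
      _ ≤ ‖(m:ℂ)⁻¹‖ * ∑ _k ∈ Finset.range m, M := by
          gcongr with k hk
          exact hb k hk
      _ = M := by
          rw [Finset.sum_const, Finset.card_range, norm_inv, Complex.norm_natCast,
            nsmul_eq_mul]
          field_simp
  have hg0 : g 0 = a 1 := by
    have h1 := (hgsum 0 h01).unique (aux_hasSum_zero d)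
    rw [h1, hddef]
    simp [hc]
  have hdm : d m = a n := by
    rw [hddef]; simp only [dvd_refl, if_pos, hc]
    rw [hmn]
  have hqsummable : ∀ z ∈ Metric.ball (0:ℂ) 1,
      Summable (fun j : ℕ => d (j + m) * z ^ j) := by
    intro z hz
    rcases eq_or_ne z 0 with rfl | hz0
    · exact (aux_hasSum_zero fun j => d (j + m)).summable
    · have h1 := (hasSum_nat_add_iff' (f := fun j : ℕ => d j * z ^ j) m).2 (hgsum z hz)
      refine (h1.summable.mul_right (z ^ m)⁻¹).congr fun j => ?_
      rw [pow_add]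
      have : (z:ℂ) ^ m ≠ 0 := pow_ne_zero _ hz0
      field_simp
  set q : ℂ → ℂ := fun z => ∑' j : ℕ, d (j + m) * z ^ j with hqdef
  have hqsum : ∀ z ∈ Metric.ball (0:ℂ) 1,
      HasSum (fun j : ℕ => d (j + m) * z ^ j) (q z) :=
    fun z hz => (hqsummable z hz).hasSum
  have hqdiff : DifferentiableOn ℂ q (Metric.ball 0 1) := aux_diffOn _ q hqsum
  have hq0 : q 0 = a n := by
    have h1 := (hqsum 0 h01).unique (aux_hasSum_zero fun j => d (j + m))
    rw [h1, zero_add, hdm]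
  have hsum_small : ∀ z : ℂ, ∑ i ∈ Finset.range m, d i * z ^ i = a 1 := by
    intro z
    rw [Finset.sum_eq_single 0]
    · rw [hddef]; simp [hc]
    · intro i hi hine
      have hnd : ¬ m ∣ i := fun hdvd =>
        absurd (Nat.le_of_dvd (Nat.pos_of_ne_zero hine) hdvd)
          (not_le.2 (Finset.mem_range.1 hi))
      rw [hddef]; simp [hnd]
    · intro h; exact absurd (Finset.mem_range.2 hm0) h
  have hfact : ∀ z ∈ Metric.ball (0:ℂ) 1, g z - a 1 = z ^ m * q z := by
    intro z hz
    rcases eq_or_ne z 0 with rfl | hz0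
    · rw [hg0, zero_pow hm0.ne']; ring
    · have h1 := (hasSum_nat_add_iff' (f := fun j : ℕ => d j * z ^ j) m).2 (hgsum z hz)
      rw [hsum_small z] at h1
      have h2 := (hqsum z hz).mul_right (z ^ m)
      have h3 : (fun j : ℕ => d (j + m) * z ^ j * z ^ m)
          = fun j : ℕ => d (j + m) * z ^ (j + m) := by
        funext j; rw [pow_add]; ring
      rw [h3] at h2
      rw [h1.unique h2]; ring
  rcases eq_or_lt_of_le hM1 with hMeq | hMlt
  · -- M = 1
    have hφmax : IsMaxOn (norm ∘ φ) (Metric.ball (0:ℂ) 1) 0 := by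
      intro w hw
      simp only [Function.comp_apply, Set.mem_setOf_eq, hφ0, ha1]
      calc ‖φ w‖ ≤ M := hφM w (mem_ball_zero_iff.1 hw)
        _ = 1 := hMeq.symm
    have hconst := Complex.eqOn_of_isPreconnected_of_isMaxOn_norm
      (convex_ball (0:ℂ) 1).isPreconnected isOpen_ball hφdiff h01 hφmax
    have hgconst : ∀ z ∈ Metric.ball (0:ℂ) 1, g z = a 1 := by
      intro z hz
      have he : ∀ k ∈ Finset.range m, φ (ω ^ k * z) = a 1 := by
        intro k _
        have := hconst (hmem k z hz)
        simp only [Function.const_apply] at this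
        rw [this, hφ0]
      rw [hgdef]
      simp only
      rw [Finset.sum_congr rfl he, Finset.sum_const, Finset.card_range, nsmul_eq_mul]
      field_simp
    have hqzero : ∀ z ∈ Metric.ball (0:ℂ) 1, z ≠ 0 → q z = 0 := by
      intro z hz hz0
      have h1 := hfact z hz
      rw [hgconst z hz, sub_self] at h1
      have h2 : (z:ℂ) ^ m ≠ 0 := pow_ne_zero _ hz0
      exact (mul_eq_zero.1 h1.symm).resolve_left h2
    have hq00 : q 0 = 0 := by
      have hcont : ContinuousAt q 0 :=
        (hqdiff.differentiableAt (isOpen_ball.mem_nhds h01)).continuousAt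
      have h1 : Filter.Tendsto q (nhdsWithin 0 {(0:ℂ)}ᶜ) (nhds (q 0)) :=
        hcont.continuousWithinAt.tendsto
      have h2 : Filter.Tendsto q (nhdsWithin 0 {(0:ℂ)}ᶜ) (nhds 0) := by
        refine Filter.Tendsto.congr' ?_ tendsto_const_nhds
        filter_upwards [self_mem_nhdsWithin,
          mem_nhdsWithin_of_mem_nhds (isOpen_ball.mem_nhds h01)] with w hw1 hw2
        exact (hqzero w hw2 hw1).symm
      exact tendsto_nhds_unique h1 h2
    have : a n = 0 := by rw [← hq0, hq00]
    rw [this, norm_zero, ← hMeq]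
    norm_num
  · -- 1 < M
    have hden : ∀ z ∈ Metric.ball (0:ℂ) 1,
        (M:ℂ) ^ 2 - (starRingEnd ℂ) (a 1) * g z ≠ 0 := by
      intro z hz h0
      rw [sub_eq_zero] at h0
      have h1 : ‖(M:ℂ) ^ 2‖ = ‖(starRingEnd ℂ) (a 1) * g z‖ := by rw [h0]
      rw [norm_pow, Complex.norm_real, Real.norm_eq_abs, abs_of_pos hM, norm_mul,
        RCLike.norm_conj, ha1, one_mul] at h1
      have h2 := hgM z hz
      nlinarith
    set h : ℂ → ℂ := fun z => q z * ((M:ℂ) ^ 2 - (starRingEnd ℂ) (a 1) * g z)⁻¹ with hhdef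
    have hhdiff : DifferentiableOn ℂ h (Metric.ball 0 1) := by
      refine hqdiff.mul (DifferentiableOn.inv ?_ hden)
      exact (differentiableOn_const _).sub ((differentiableOn_const _).mul hgdiff)
    have hbound : ∀ z : ℂ, ‖z‖ < 1 → ‖z ^ m * h z‖ ≤ 1 / M := by
      intro z hz
      have hz' : z ∈ Metric.ball (0:ℂ) 1 := mem_ball_zero_iff.2 hz
      have heq : z ^ m * h z
          = (g z - a 1) * ((M:ℂ) ^ 2 - (starRingEnd ℂ) (a 1) * g z)⁻¹ := by
        rw [hhdef]
        simp only
        rw [← mul_assoc, ← hfact z hz']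
      rw [heq, norm_mul, norm_inv]
      have hmob := aux_mobius M hM1 (a 1) (g z) ha1 (hgM z hz')
      have hdpos : 0 < ‖(M:ℂ) ^ 2 - (starRingEnd ℂ) (a 1) * g z‖ :=
        norm_pos_iff.2 (hden z hz')
      rw [← div_eq_mul_inv, div_le_div_iff₀ hdpos hM]
      calc ‖g z - a 1‖ * M = M * ‖g z - a 1‖ := by ring
        _ ≤ ‖(M:ℂ) ^ 2 - (starRingEnd ℂ) (a 1) * g z‖ := hmob
        _ = 1 * ‖(M:ℂ) ^ 2 - (starRingEnd ℂ) (a 1) * g z‖ := by ring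
    have hfin := aux_maxmod h hhdiff (1 / M) m hbound 0 (by norm_num)
    have hconj : (starRingEnd ℂ) (a 1) * a 1 = 1 := by
      rw [mul_comm, Complex.mul_conj]
      rw [Complex.normSq_eq_norm_sq, ha1]
      norm_num
    have hh0 : h 0 = a n * ((M:ℂ) ^ 2 - 1)⁻¹ := by
      rw [hhdef]
      simp only
      rw [hq0, hg0, hconj]
    have hM21 : (0:ℝ) < M ^ 2 - 1 := by nlinarith
    have hnorm : ‖h 0‖ = ‖a n‖ / (M ^ 2 - 1) := by
      rw [hh0, norm_mul, norm_inv]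
      have : ((M:ℂ) ^ 2 - 1) = ((M ^ 2 - 1 : ℝ) : ℂ) := by push_cast; ring
      rw [this, Complex.norm_real, Real.norm_eq_abs, abs_of_pos hM21, div_eq_mul_inv]
    rw [hnorm] at hfin
    rw [div_le_div_iff₀ hM21 hM] at hfin
    have hgoal : M - 1 / M = (M ^ 2 - 1) / M := by field_simp
    rw [hgoal, le_div_iff₀ hM]
    calc ‖a n‖ * M = ‖a n‖ * M := rfl
      _ ≤ 1 * (M ^ 2 - 1) := hfin
      _ = M ^ 2 - 1 := by ring
end

section
/- Let Λ₀ > 1, Λ₁, …, Λ_{p-1} ≥ 0, and let F(z) = Σ_{k=0}^{p-1} conj(z)^k · A_k(z) where each A_k is analytic on U, A_k(0) = 0, A₀'(0) = 1, |A₀'(z)| < Λ₀ and |A_k'(z)| ≤ Λ_k (k = 1, …, p-1) on U. If ρ₁ ∈ (0,1) satisfies Λ₀(1-Λ₀ρ₁)/(Λ₀-ρ₁) - Σ_{k=1}^{p-1}(k+1)Λ_k ρ₁^k = 0, then F is injective on the disk U_{ρ₁} = {|z| < ρ₁}. -/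
open Metric Set
set_option maxHeartbeats 1000000

lemma keyQuad (L ρ x y : ℝ) (hL : 1 < L) (hρ0 : 0 ≤ ρ) (hρ1 : ρ < 1)
    (h : L^2*((x-1)^2+y^2) ≤ ρ^2*((L^2-x)^2+y^2)) :
    (x - L^2*(1-ρ^2)/(L^2-ρ^2))^2 + y^2 ≤ (L*ρ*(L^2-1)/(L^2-ρ^2))^2 := by
  have hρ2 : ρ^2 < 1 := by nlinarith
  have hd : (0:ℝ) < L^2 - ρ^2 := by nlinarith
  have e1 : (x - L^2*(1-ρ^2)/(L^2-ρ^2))^2 + y^2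
      = (((L^2-ρ^2)*x - L^2*(1-ρ^2))^2 + y^2*(L^2-ρ^2)^2)/(L^2-ρ^2)^2 := by
    field_simp
  have e2 : (L*ρ*(L^2-1)/(L^2-ρ^2))^2 = (L*ρ*(L^2-1))^2/(L^2-ρ^2)^2 := by
    rw [div_pow]
  rw [e1, e2]
  apply div_le_div_of_nonneg_right ?_ (by positivity)
  · nlinarith [mul_le_mul_of_nonneg_left h hd.le]

lemma pick (L : ℝ) (hL : 1 < L) (h : ℂ → ℂ) (hd : DifferentiableOn ℂ h (ball 0 1))
    (h0 : h 0 = 1) (hb : ∀ z ∈ ball (0:ℂ) 1, ‖h z‖ < L)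
    (ρ : ℝ) (hρ1 : ρ < 1) (z : ℂ) (hz : ‖z‖ ≤ ρ) :
    ‖h z - (L^2*(1-ρ^2)/(L^2-ρ^2) : ℝ)‖ ≤ L*ρ*(L^2-1)/(L^2-ρ^2) := by
  have hρ0 : 0 ≤ ρ := le_trans (norm_nonneg z) hz
  have hzb : z ∈ ball (0:ℂ) 1 := by
    rw [mem_ball_zero_iff]; exact lt_of_le_of_lt hz hρ1
  have hL0 : (0:ℝ) < L := lt_trans one_pos hL
  -- denominator never vanishes
  have hden : ∀ w ∈ ball (0:ℂ) 1, ((L:ℂ)^2 - h w) ≠ 0 := by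
    intro w hw hc
    have : ‖((L:ℂ)^2 - h w)‖ = 0 := by rw [hc]; simp
    have h1 : ‖((L:ℂ)^2 : ℂ)‖ = L^2 := by
      rw [← Complex.ofReal_pow]; simp [abs_of_pos (pow_pos hL0 2)]
    have h2 : ‖h w‖ < L := hb w hw
    have := norm_sub_norm_le ((L:ℂ)^2) (h w)
    nlinarith
  set g : ℂ → ℂ := fun w => (L:ℂ) * (h w - 1) / ((L:ℂ)^2 - h w) with hg
  have hgd : DifferentiableOn ℂ g (ball 0 1) := by
    apply DifferentiableOn.div
    · exact (differentiableOn_const _).mul (hd.sub (differentiableOn_const _))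
    · exact (differentiableOn_const _).sub hd
    · exact hden
  have hg0 : g 0 = 0 := by simp [hg, h0]
  have hnorm : ∀ w ∈ ball (0:ℂ) 1, ‖g w‖ < 1 := by
    intro w hw
    have hdw := hden w hw
    have hbw := hb w hw
    rw [hg]
    simp only [norm_div]
    rw [div_lt_one (norm_pos_iff.mpr hdw)]
    apply lt_of_pow_lt_pow_left₀ 2 (norm_nonneg _)
    have e1 : ‖(L:ℂ) * (h w - 1)‖^2 = L^2 * (((h w).re - 1)^2 + (h w).im^2) := by
      rw [norm_mul, Complex.norm_real, Real.norm_eq_abs, abs_of_pos hL0, mul_pow,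
        Complex.sq_norm, Complex.normSq_apply, Complex.sub_re,
        Complex.sub_im]
      simp only [Complex.one_re, Complex.one_im]
      ring
    have e2 : ‖((L:ℂ)^2 - h w)‖^2 = (L^2 - (h w).re)^2 + (h w).im^2 := by
      rw [Complex.sq_norm, Complex.normSq_apply]
      simp [Complex.sub_re, Complex.sub_im, ← Complex.ofReal_pow]
      ring
    have e3 : ‖h w‖^2 = (h w).re^2 + (h w).im^2 := by
      rw [Complex.sq_norm, Complex.normSq_apply]; ring
    have hb2 : (h w).re^2 + (h w).im^2 < L^2 := by
      rw [← e3]; nlinarith [norm_nonneg (h w)]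
    rw [e1, e2]
    nlinarith [mul_pos (show (0:ℝ) < L^2 - 1 by nlinarith)
      (show (0:ℝ) < L^2 - ((h w).re^2 + (h w).im^2) by nlinarith)]
  -- Schwarz lemma
  have hmaps : Set.MapsTo g (ball 0 1) (ball (g 0) 1) := by
    intro w hw
    rw [hg0, mem_ball_zero_iff]
    exact hnorm w hw
  have hschwarz := Complex.dist_le_div_mul_dist_of_mapsTo_ball hgd (hmaps.mono_right ball_subset_closedBall) hzb
  rw [hg0, dist_zero_right, dist_zero_right] at hschwarz
  have hgz : ‖g z‖ ≤ ρ := by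
    calc ‖g z‖ ≤ 1/1 * ‖z‖ := hschwarz
    _ ≤ ρ := by simpa using hz
  -- convert back
  have hdz := hden z hzb
  have hineq : ‖(L:ℂ) * (h z - 1)‖ ≤ ρ * ‖((L:ℂ)^2 - h z)‖ := by
    rw [hg, norm_div] at hgz
    exact (div_le_iff₀ (norm_pos_iff.mpr hdz)).mp hgz
  have e1 : ‖(L:ℂ) * (h z - 1)‖^2 = L^2 * (((h z).re - 1)^2 + (h z).im^2) := by
    rw [norm_mul, Complex.norm_real, Real.norm_eq_abs, abs_of_pos hL0, mul_pow,
      Complex.sq_norm, Complex.normSq_apply, Complex.sub_re,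
      Complex.sub_im]
    simp only [Complex.one_re, Complex.one_im]
    ring
  have e2 : ‖((L:ℂ)^2 - h z)‖^2 = (L^2 - (h z).re)^2 + (h z).im^2 := by
    rw [Complex.sq_norm, Complex.normSq_apply]
    simp [Complex.sub_re, Complex.sub_im, ← Complex.ofReal_pow]
    ring
  have hsq : L^2 * (((h z).re - 1)^2 + (h z).im^2)
      ≤ ρ^2 * ((L^2 - (h z).re)^2 + (h z).im^2) := by
    have := pow_le_pow_left₀ (norm_nonneg _) hineq 2
    rw [e1, mul_pow, e2] at this
    exact this
  have hkq := keyQuad L ρ (h z).re (h z).im hL hρ0 hρ1 hsq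
  have hd2 : (0:ℝ) < L^2 - ρ^2 := by nlinarith
  have hR0 : 0 ≤ L*ρ*(L^2-1)/(L^2-ρ^2) :=
    div_nonneg (mul_nonneg (mul_nonneg hL0.le hρ0) (by nlinarith)) hd2.le
  apply le_of_pow_le_pow_left₀ two_ne_zero hR0
  have e3 : ‖h z - (L^2*(1-ρ^2)/(L^2-ρ^2) : ℝ)‖^2
      = ((h z).re - L^2*(1-ρ^2)/(L^2-ρ^2))^2 + (h z).im^2 := by
    rw [Complex.sq_norm, Complex.normSq_apply, Complex.sub_re,
      Complex.sub_im, Complex.ofReal_re, Complex.ofReal_im]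
    ring
  rw [e3]
  exact hkq

theorem stmt6 (p : ℕ) (hp : 0 < p) (Λ : ℕ → ℝ) (hΛ0 : 1 < Λ 0)
    (hΛ : ∀ k ∈ Finset.Icc 1 (p - 1), 0 ≤ Λ k)
    (A : ℕ → ℂ → ℂ)
    (hA : ∀ k ∈ Finset.range p, DifferentiableOn ℂ (A k) (Metric.ball 0 1))
    (hA0 : ∀ k ∈ Finset.range p, A k 0 = 0)
    (hA0'0 : deriv (A 0) 0 = 1)
    (hA0' : ∀ z ∈ Metric.ball (0 : ℂ) 1, ‖deriv (A 0) z‖ < Λ 0)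
    (hAk' : ∀ k ∈ Finset.Icc 1 (p - 1), ∀ z ∈ Metric.ball (0 : ℂ) 1,
      ‖deriv (A k) z‖ ≤ Λ k)
    (F : ℂ → ℂ)
    (hF : ∀ z, F z = ∑ k ∈ Finset.range p, (starRingEnd ℂ z) ^ k * A k z)
    (ρ₁ : ℝ) (hρ₁ : ρ₁ ∈ Set.Ioo (0 : ℝ) 1)
    (hroot : Λ 0 * (1 - Λ 0 * ρ₁) / (Λ 0 - ρ₁)
      - ∑ k ∈ Finset.Icc 1 (p - 1), ((k : ℝ) + 1) * Λ k * ρ₁ ^ k = 0) :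
    Set.InjOn F (Metric.ball 0 ρ₁) := by
  obtain ⟨hρ₁0, hρ₁1⟩ := hρ₁
  intro z₁ hz₁ z₂ hz₂ hFz
  by_contra hne
  rw [mem_ball_zero_iff] at hz₁ hz₂
  set L := Λ 0 with hLdef
  set ρ := max ‖z₁‖ ‖z₂‖ with hρdef
  have hρ0 : 0 ≤ ρ := le_max_of_le_left (norm_nonneg _)
  have hρρ₁ : ρ < ρ₁ := max_lt hz₁ hz₂
  have hρ1 : ρ < 1 := hρρ₁.trans hρ₁1
  have hL0 : (0:ℝ) < L := lt_trans one_pos hΛ0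
  set s := Metric.closedBall (0:ℂ) ρ with hsdef
  have hz₁s : z₁ ∈ s := by rw [mem_closedBall_zero_iff]; exact le_max_left _ _
  have hz₂s : z₂ ∈ s := by rw [mem_closedBall_zero_iff]; exact le_max_right _ _
  have hsub : s ⊆ Metric.ball (0:ℂ) 1 := Metric.closedBall_subset_ball hρ1
  have hd : 0 < ‖z₁ - z₂‖ := by rw [norm_pos_iff]; exact sub_ne_zero.mpr hne
  set d := ‖z₁ - z₂‖ with hddef
  have hmem : ∀ k, k ∈ Finset.Icc 1 (p-1) → k ∈ Finset.range p := by
    intro k hk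
    rw [Finset.mem_Icc] at hk
    rw [Finset.mem_range]
    exact lt_of_le_of_lt hk.2 (Nat.sub_lt hp one_pos)
  have h0mem : 0 ∈ Finset.range p := Finset.mem_range.mpr hp
  have hder : ∀ k ∈ Finset.range p, ∀ x ∈ Metric.ball (0:ℂ) 1,
      HasDerivAt (A k) (deriv (A k) x) x := by
    intro k hk x hx
    exact ((hA k hk).differentiableAt (Metric.isOpen_ball.mem_nhds hx)).hasDerivAt
  have hD : DifferentiableOn ℂ (deriv (A 0)) (Metric.ball 0 1) :=
    (((hA 0 h0mem).analyticOnNhd Metric.isOpen_ball).deriv).differentiableOn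
  set C := L^2*(1-ρ^2)/(L^2-ρ^2) with hC
  set R := L*ρ*(L^2-1)/(L^2-ρ^2) with hR
  have hpick : ∀ x ∈ s, ‖deriv (A 0) x - (C:ℂ)‖ ≤ R := by
    intro x hx
    rw [mem_closedBall_zero_iff] at hx
    exact pick L hΛ0 (deriv (A 0)) hD hA0'0 hA0' ρ hρ1 x hx
  have hL2ρ : (0:ℝ) < L^2 - ρ^2 := by nlinarith
  have hLρ : (0:ℝ) < L - ρ := by nlinarith
  have hLρ₁ : (0:ℝ) < L - ρ₁ := by nlinarith
  have hC0 : 0 < C := div_pos (by nlinarith [mul_pos hL0 hL0,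
    (show (0:ℝ) < 1-ρ^2 by nlinarith)]) hL2ρ
  -- mean value for A 0 - C z
  have hMV0 : ‖(A 0 z₁ - (C:ℂ)*z₁) - (A 0 z₂ - (C:ℂ)*z₂)‖ ≤ R * d := by
    refine Convex.norm_image_sub_le_of_norm_hasDerivWithin_le
      (f := fun z => A 0 z - (C:ℂ)*z) (f' := fun z => deriv (A 0) z - (C:ℂ))
      (s := s) ?_ hpick (convex_closedBall _ _) hz₂s hz₁s
    intro x hx
    have h1 := hder 0 h0mem x (hsub hx)
    have h2 : HasDerivAt (fun z : ℂ => (C:ℂ)*z) (C:ℂ) x := by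
      simpa using (hasDerivAt_id x).const_mul (C:ℂ)
    exact (h1.sub h2).hasDerivWithinAt
  have hlow : (C - R) * d ≤ ‖A 0 z₁ - A 0 z₂‖ := by
    have h1 : ‖(C:ℂ)*(z₁-z₂)‖ = C * d := by
      rw [norm_mul, Complex.norm_real, Real.norm_eq_abs, abs_of_pos hC0]
    have h2 : ‖(C:ℂ)*(z₁-z₂)‖
        ≤ ‖A 0 z₁ - A 0 z₂‖ + ‖(A 0 z₁ - (C:ℂ)*z₁) - (A 0 z₂ - (C:ℂ)*z₂)‖ := by
      have e : (C:ℂ)*(z₁-z₂)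
          = (A 0 z₁ - A 0 z₂) - ((A 0 z₁ - (C:ℂ)*z₁) - (A 0 z₂ - (C:ℂ)*z₂)) := by ring
      rw [e]
      exact norm_sub_le _ _
    rw [h1] at h2
    linarith [hMV0]
  -- mean value bounds for k ≥ 1
  have hMVk : ∀ k ∈ Finset.Icc 1 (p-1), ∀ x ∈ s, ∀ y ∈ s,
      ‖A k x - A k y‖ ≤ Λ k * ‖x - y‖ := by
    intro k hk x hx y hy
    exact Convex.norm_image_sub_le_of_norm_hasDerivWithin_le
      (f' := fun z => deriv (A k) z)
      (fun w hw => (hder k (hmem k hk) w (hsub hw)).hasDerivWithinAt)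
      (fun w hw => hAk' k hk w (hsub hw)) (convex_closedBall _ _) hy hx
  have hpow : ∀ (k:ℕ), ∀ x ∈ s, ∀ y ∈ s, ‖x^k - y^k‖ ≤ (k:ℝ)*ρ^(k-1) * ‖x - y‖ := by
    intro k x hx y hy
    refine Convex.norm_image_sub_le_of_norm_hasDerivWithin_le
      (f' := fun z : ℂ => (k:ℂ)*z^(k-1))
      (fun w _ => (hasDerivAt_pow k w).hasDerivWithinAt)
      ?_ (convex_closedBall _ _) hy hx
    intro w hw
    rw [mem_closedBall_zero_iff] at hw
    show ‖(k:ℂ) * w^(k-1)‖ ≤ (k:ℝ)*ρ^(k-1)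
    rw [norm_mul, norm_pow]
    have hk : ‖(k:ℂ)‖ = (k:ℝ) := by simp
    rw [hk]
    exact mul_le_mul_of_nonneg_left (pow_le_pow_left₀ (norm_nonneg _) hw _) (Nat.cast_nonneg k)
  have hval : ∀ k ∈ Finset.Icc 1 (p-1), ∀ x ∈ s, ‖A k x‖ ≤ Λ k * ρ := by
    intro k hk x hx
    have h0s : (0:ℂ) ∈ s := Metric.mem_closedBall_self hρ0
    have h := hMVk k hk x hx 0 h0s
    rw [hA0 k (hmem k hk), sub_zero, sub_zero] at h
    refine h.trans ?_
    exact mul_le_mul_of_nonneg_left (mem_closedBall_zero_iff.mp hx) (hΛ k hk)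
  have hterm : ∀ k ∈ Finset.Icc 1 (p-1),
      ‖(starRingEnd ℂ z₁)^k * A k z₁ - (starRingEnd ℂ z₂)^k * A k z₂‖
        ≤ ((k:ℝ)+1) * Λ k * ρ^k * d := by
    intro k hk
    obtain ⟨hk1, hk2⟩ := Finset.mem_Icc.mp hk
    have hid : (starRingEnd ℂ z₁)^k * A k z₁ - (starRingEnd ℂ z₂)^k * A k z₂
        = ((starRingEnd ℂ z₁)^k - (starRingEnd ℂ z₂)^k) * A k z₁
          + (starRingEnd ℂ z₂)^k * (A k z₁ - A k z₂) := by ring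
    have h1 : ‖(starRingEnd ℂ z₁)^k - (starRingEnd ℂ z₂)^k‖ = ‖z₁^k - z₂^k‖ := by
      rw [← map_pow, ← map_pow, ← map_sub, RCLike.norm_conj]
    have h2 : ‖(starRingEnd ℂ z₂)^k‖ = ‖z₂‖^k := by
      rw [← map_pow, RCLike.norm_conj, norm_pow]
    have hA1 := hval k hk z₁ hz₁s
    have hA12 := hMVk k hk z₁ hz₁s z₂ hz₂s
    have hzp := hpow k z₁ hz₁s z₂ hz₂s
    have hz2k : ‖z₂‖^k ≤ ρ^k := pow_le_pow_left₀ (norm_nonneg _) (le_max_right _ _) k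
    have hΛk := hΛ k hk
    rw [hid]
    refine (norm_add_le _ _).trans ?_
    rw [norm_mul, norm_mul, h1, h2]
    have b1 : ‖z₁^k - z₂^k‖ * ‖A k z₁‖ ≤ ((k:ℝ)*ρ^(k-1)*d) * (Λ k * ρ) :=
      mul_le_mul hzp hA1 (norm_nonneg _) (by positivity)
    have b2 : ‖z₂‖^k * ‖A k z₁ - A k z₂‖ ≤ ρ^k * (Λ k * d) :=
      mul_le_mul hz2k hA12 (norm_nonneg _) (by positivity)
    have hpowk : ρ^(k-1)*ρ = ρ^k := by rw [← pow_succ, Nat.sub_add_cancel hk1]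
    have e : ((k:ℝ)*ρ^(k-1)*d) * (Λ k * ρ) + ρ^k * (Λ k * d)
        = ((k:ℝ)+1) * Λ k * ρ^k * d := by rw [← hpowk]; ring
    linarith [b1, b2]
  -- sum splitting
  have hIcc : Finset.Icc 1 (p-1) = Finset.Ico 1 p := by
    rw [← Finset.Ico_add_one_right_eq_Icc]
    congr 1
    omega
  have hsplit : ∀ z, F z = A 0 z + ∑ k ∈ Finset.Icc 1 (p-1), (starRingEnd ℂ z)^k * A k z := by
    intro z
    rw [hF z, hIcc, Finset.sum_Ico_eq_sub _ hp, Finset.sum_range_one]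
    simp
  have hdiff : A 0 z₁ - A 0 z₂
      = ∑ k ∈ Finset.Icc 1 (p-1),
          ((starRingEnd ℂ z₂)^k * A k z₂ - (starRingEnd ℂ z₁)^k * A k z₁) := by
    have h1 := hsplit z₁
    have h2 := hsplit z₂
    rw [hFz] at h1
    rw [Finset.sum_sub_distrib]
    have h3 : A 0 z₁ + ∑ k ∈ Finset.Icc 1 (p-1), (starRingEnd ℂ z₁)^k * A k z₁
        = A 0 z₂ + ∑ k ∈ Finset.Icc 1 (p-1), (starRingEnd ℂ z₂)^k * A k z₂ := by
      rw [← h1, ← h2]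
    linear_combination h3
  have hup : ‖A 0 z₁ - A 0 z₂‖ ≤ (∑ k ∈ Finset.Icc 1 (p-1), ((k:ℝ)+1)*Λ k*ρ^k) * d := by
    rw [hdiff]
    refine (norm_sum_le _ _).trans ?_
    rw [Finset.sum_mul]
    apply Finset.sum_le_sum
    intro k hk
    rw [norm_sub_rev]
    exact hterm k hk
  -- monotonicity in ρ
  have hSle : ∑ k ∈ Finset.Icc 1 (p-1), ((k:ℝ)+1)*Λ k*ρ^k
      ≤ ∑ k ∈ Finset.Icc 1 (p-1), ((k:ℝ)+1)*Λ k*ρ₁^k := by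
    apply Finset.sum_le_sum
    intro k hk
    exact mul_le_mul_of_nonneg_left (pow_le_pow_left₀ hρ0 hρρ₁.le k)
      (mul_nonneg (by positivity) (hΛ k hk))
  have hroot' : L*(1-L*ρ₁)/(L-ρ₁) = ∑ k ∈ Finset.Icc 1 (p-1), ((k:ℝ)+1)*Λ k*ρ₁^k := by
    linarith [hroot]
  have hlam : ∑ k ∈ Finset.Icc 1 (p-1), ((k:ℝ)+1)*Λ k*ρ₁^k < L*(1-L*ρ)/(L-ρ) := by
    rw [← hroot', div_lt_div_iff₀ hLρ₁ hLρ]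
    nlinarith [mul_pos (mul_pos hL0 (sub_pos.mpr hρρ₁)) (show (0:ℝ) < L^2-1 by nlinarith)]
  have hCR : C - R = L*(1-L*ρ)/(L-ρ) := by
    rw [hC, hR]
    have h1 : L^2-ρ^2 ≠ 0 := ne_of_gt hL2ρ
    have h2 : L-ρ ≠ 0 := ne_of_gt hLρ
    field_simp
    ring
  have hfin1 : (∑ k ∈ Finset.Icc 1 (p-1), ((k:ℝ)+1)*Λ k*ρ₁^k) * d < (C - R) * d := by
    rw [hCR]
    exact mul_lt_mul_of_pos_right hlam hd
  have hfin2 : (∑ k ∈ Finset.Icc 1 (p-1), ((k:ℝ)+1)*Λ k*ρ^k) * d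
      ≤ (∑ k ∈ Finset.Icc 1 (p-1), ((k:ℝ)+1)*Λ k*ρ₁^k) * d :=
    mul_le_mul_of_nonneg_right hSle hd.le
  linarith [hlow, hup]
end

section
/- Let Λ₁, …, Λ_{p-1} ≥ 0 with Σ_{k=1}^{p-1} (k+1)Λ_k ≤ 1, and let F(z) = z + Σ_{k=1}^{p-1} conj(z)^k A_k(z), where each A_k is analytic on the unit disk U with A_k(0) = 0 and |A_k'(z)| ≤ Λ_k on U. Then F is injective on U. -/
theorem stmt8 (p : ℕ) (hp : 0 < p) (Λ : ℕ → ℝ)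
    (hΛ : ∀ k ∈ Finset.Icc 1 (p - 1), 0 ≤ Λ k)
    (hsum : ∑ k ∈ Finset.Icc 1 (p - 1), ((k : ℝ) + 1) * Λ k ≤ 1)
    (A : ℕ → ℂ → ℂ)
    (hA : ∀ k ∈ Finset.Icc 1 (p - 1), DifferentiableOn ℂ (A k) (Metric.ball 0 1))
    (hA0 : ∀ k ∈ Finset.Icc 1 (p - 1), A k 0 = 0)
    (hAk' : ∀ k ∈ Finset.Icc 1 (p - 1), ∀ z ∈ Metric.ball (0 : ℂ) 1,
      ‖deriv (A k) z‖ ≤ Λ k)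
    (F : ℂ → ℂ)
    (hF : ∀ z, F z = z + ∑ k ∈ Finset.Icc 1 (p - 1), (starRingEnd ℂ z) ^ k * A k z) :
    Set.InjOn F (Metric.ball 0 1) := by
  intro z hz w hw hFzw
  by_contra hne
  set r : ℝ := max ‖z‖ ‖w‖ with hr
  have hzr : ‖z‖ ≤ r := le_max_left _ _
  have hwr : ‖w‖ ≤ r := le_max_right _ _
  have hr0 : 0 ≤ r := le_trans (norm_nonneg _) hzr
  have hr1 : r < 1 := by
    simp only [Metric.mem_ball, dist_zero_right] at hz hw
    exact max_lt hz hw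
  have hzw : (0:ℝ) < ‖z - w‖ := by
    rw [norm_pos_iff, sub_ne_zero]; exact hne
  -- Lipschitz bound for A k on the ball
  have hlip : ∀ k ∈ Finset.Icc 1 (p - 1), ∀ x ∈ Metric.ball (0:ℂ) 1,
      ∀ y ∈ Metric.ball (0:ℂ) 1, ‖A k y - A k x‖ ≤ Λ k * ‖y - x‖ := by
    intro k hk x hx y hy
    refine Convex.norm_image_sub_le_of_norm_deriv_le
      (fun t ht => (hA k hk t ht).differentiableAt (Metric.isOpen_ball.mem_nhds ht))
      (fun t ht => hAk' k hk t ht) (convex_ball 0 1) hx hy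
  have hball0 : (0:ℂ) ∈ Metric.ball (0:ℂ) 1 := by simp
  -- bound on each term
  have key : ∀ k ∈ Finset.Icc 1 (p - 1),
      ‖(starRingEnd ℂ z) ^ k * A k z - (starRingEnd ℂ w) ^ k * A k w‖
        ≤ ((k : ℝ) + 1) * Λ k * (r * ‖z - w‖) := by
    intro k hk
    have hk1 : 1 ≤ k := (Finset.mem_Icc.mp hk).1
    have hΛk : 0 ≤ Λ k := hΛ k hk
    have hAw : ‖A k w‖ ≤ Λ k * ‖w‖ := by
      have := hlip k hk 0 hball0 w hw
      simpa [hA0 k hk] using this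
    have hAzw : ‖A k z - A k w‖ ≤ Λ k * ‖z - w‖ := hlip k hk w hw z hz
    -- power difference via MVT on closed ball of radius r
    have hpow : ‖(starRingEnd ℂ z) ^ k - (starRingEnd ℂ w) ^ k‖
        ≤ (k : ℝ) * r ^ (k - 1) * ‖z - w‖ := by
      have h1 : (starRingEnd ℂ w) ∈ Metric.closedBall (0:ℂ) r := by
        simpa [Metric.mem_closedBall, dist_zero_right] using hwr
      have h2 : (starRingEnd ℂ z) ∈ Metric.closedBall (0:ℂ) r := by
        simpa [Metric.mem_closedBall, dist_zero_right] using hzr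
      have := Convex.norm_image_sub_le_of_norm_deriv_le (f := fun t : ℂ => t ^ k)
        (s := Metric.closedBall 0 r) (C := (k : ℝ) * r ^ (k - 1))
        (fun t _ => differentiableAt_pow k)
        (fun t ht => by
          rw [deriv_pow_field]
          simp only [Metric.mem_closedBall, dist_zero_right] at ht
          calc ‖(k : ℂ) * t ^ (k - 1)‖ = (k : ℝ) * ‖t‖ ^ (k - 1) := by
                simp [norm_pow]
            _ ≤ (k : ℝ) * r ^ (k - 1) := by
                gcongr)
        (convex_closedBall (0:ℂ) r) h1 h2
      calc ‖(starRingEnd ℂ z) ^ k - (starRingEnd ℂ w) ^ k‖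
          ≤ (k : ℝ) * r ^ (k - 1) * ‖starRingEnd ℂ z - starRingEnd ℂ w‖ := this
        _ = (k : ℝ) * r ^ (k - 1) * ‖z - w‖ := by
            rw [← map_sub, RCLike.norm_conj]
    have split : (starRingEnd ℂ z) ^ k * A k z - (starRingEnd ℂ w) ^ k * A k w
        = (starRingEnd ℂ z) ^ k * (A k z - A k w)
          + ((starRingEnd ℂ z) ^ k - (starRingEnd ℂ w) ^ k) * A k w := by ring
    have hrk : r ^ k ≤ r := by
      calc r ^ k ≤ r ^ 1 := pow_le_pow_of_le_one hr0 hr1.le hk1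
        _ = r := pow_one r
    have hzk : ‖(starRingEnd ℂ z) ^ k‖ ≤ r ^ k := by
      rw [norm_pow, RCLike.norm_conj]
      exact pow_le_pow_left₀ (norm_nonneg _) hzr k
    calc ‖(starRingEnd ℂ z) ^ k * A k z - (starRingEnd ℂ w) ^ k * A k w‖
        ≤ ‖(starRingEnd ℂ z) ^ k * (A k z - A k w)‖
          + ‖((starRingEnd ℂ z) ^ k - (starRingEnd ℂ w) ^ k) * A k w‖ := by
          rw [split]; exact norm_add_le _ _
      _ = ‖(starRingEnd ℂ z) ^ k‖ * ‖A k z - A k w‖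
          + ‖(starRingEnd ℂ z) ^ k - (starRingEnd ℂ w) ^ k‖ * ‖A k w‖ := by
          rw [norm_mul, norm_mul]
      _ ≤ r ^ k * (Λ k * ‖z - w‖)
          + ((k : ℝ) * r ^ (k - 1) * ‖z - w‖) * (Λ k * ‖w‖) := by
          gcongr
      _ ≤ r ^ k * (Λ k * ‖z - w‖)
          + ((k : ℝ) * r ^ (k - 1) * ‖z - w‖) * (Λ k * r) := by
          gcongr
      _ = (1 + (k : ℝ)) * Λ k * (r ^ (k - 1) * r) * ‖z - w‖ := by
          have : r ^ k = r ^ (k - 1) * r := by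
            rw [← pow_succ, Nat.sub_add_cancel hk1]
          rw [this]; ring
      _ ≤ (1 + (k : ℝ)) * Λ k * r * ‖z - w‖ := by
          have hrr : r ^ (k - 1) * r ≤ 1 * r := by
            gcongr
            exact pow_le_one₀ hr0 hr1.le
          rw [one_mul] at hrr
          gcongr
      _ = ((k : ℝ) + 1) * Λ k * (r * ‖z - w‖) := by ring
  -- sum bound
  have hsum2 : ‖∑ k ∈ Finset.Icc 1 (p - 1),
      ((starRingEnd ℂ z) ^ k * A k z - (starRingEnd ℂ w) ^ k * A k w)‖
        ≤ r * ‖z - w‖ := by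
    calc ‖∑ k ∈ Finset.Icc 1 (p - 1),
        ((starRingEnd ℂ z) ^ k * A k z - (starRingEnd ℂ w) ^ k * A k w)‖
        ≤ ∑ k ∈ Finset.Icc 1 (p - 1), ((k : ℝ) + 1) * Λ k * (r * ‖z - w‖) :=
          norm_sum_le_of_le _ key
      _ = (∑ k ∈ Finset.Icc 1 (p - 1), ((k : ℝ) + 1) * Λ k) * (r * ‖z - w‖) := by
          rw [Finset.sum_mul]
      _ ≤ 1 * (r * ‖z - w‖) := by
          gcongr
      _ = r * ‖z - w‖ := one_mul _
  -- conclusion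
  have hdiff : z - w = -(∑ k ∈ Finset.Icc 1 (p - 1),
      ((starRingEnd ℂ z) ^ k * A k z - (starRingEnd ℂ w) ^ k * A k w)) := by
    have h := hFzw
    rw [hF z, hF w] at h
    have : z - w + ∑ k ∈ Finset.Icc 1 (p - 1),
        ((starRingEnd ℂ z) ^ k * A k z - (starRingEnd ℂ w) ^ k * A k w) = 0 := by
      rw [Finset.sum_sub_distrib]
      linear_combination h
    exact eq_neg_of_add_eq_zero_left this
  have hnorm : ‖z - w‖ ≤ r * ‖z - w‖ := by
    calc ‖z - w‖ = ‖∑ k ∈ Finset.Icc 1 (p - 1),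
        ((starRingEnd ℂ z) ^ k * A k z - (starRingEnd ℂ w) ^ k * A k w)‖ := by
          rw [hdiff, norm_neg]
      _ ≤ r * ‖z - w‖ := hsum2
  nlinarith
end

section
/- Let Λ₁, …, Λ_{p-1} ≥ 0 with Σ_{k=1}^{p-1} (k+1)Λ_k > 1, and let ρ₂ ∈ (0,1) be the root of 1 - Σ_{k=1}^{p-1}(k+1)Λ_k r^k = 0. Let F(z) = z + Σ_{k=1}^{p-1} conj(z)^k A_k(z), where each A_k is analytic on U with A_k(0) = 0 and |A_k'(z)| ≤ Λ_k on U. Then F is injective on the disk {|z| < ρ₂}, and for all z with |z| < ρ₂, the image F({|z| < ρ₂}) contains the disk of radius ρ₂ - Σ_{k=1}^{p-1} Λ_k ρ₂^{k+1} centered at 0. -/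
open Metric Set Finset

private lemma pow_sub_pow_norm_le (z w : ℂ) (r : ℝ) (hz : ‖z‖ ≤ r) (hw : ‖w‖ ≤ r)
    (k : ℕ) : ‖z ^ k - w ^ k‖ ≤ (k : ℝ) * r ^ (k - 1) * ‖z - w‖ := by
  have hr : 0 ≤ r := le_trans (norm_nonneg z) hz
  rw [← geom_sum₂_mul z w k, norm_mul]
  have hb : ‖∑ i ∈ Finset.range k, z ^ i * w ^ (k - 1 - i)‖ ≤ (k : ℝ) * r ^ (k - 1) := by
    calc ‖∑ i ∈ Finset.range k, z ^ i * w ^ (k - 1 - i)‖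
        ≤ ∑ i ∈ Finset.range k, ‖z ^ i * w ^ (k - 1 - i)‖ := norm_sum_le _ _
      _ ≤ ∑ i ∈ Finset.range k, r ^ (k - 1) := by
          refine Finset.sum_le_sum fun i hi => ?_
          rw [norm_mul, norm_pow, norm_pow]
          have h1 : ‖z‖ ^ i * ‖w‖ ^ (k - 1 - i) ≤ r ^ i * r ^ (k - 1 - i) := by
            gcongr
          have h2 : r ^ i * r ^ (k - 1 - i) = r ^ (k - 1) := by
            rw [← pow_add]
            congr 1
            have := Finset.mem_range.1 hi
            omega
          linarith
      _ = (k : ℝ) * r ^ (k - 1) := by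
          rw [Finset.sum_const, Finset.card_range, nsmul_eq_mul]
  exact mul_le_mul_of_nonneg_right hb (norm_nonneg _)

private lemma lipA {A : ℂ → ℂ} {Λ : ℝ} (hA : DifferentiableOn ℂ A (Metric.ball 0 1))
    (hA' : ∀ z ∈ Metric.ball (0 : ℂ) 1, ‖deriv A z‖ ≤ Λ) :
    ∀ z ∈ Metric.ball (0 : ℂ) 1, ∀ w ∈ Metric.ball (0 : ℂ) 1, ‖A z - A w‖ ≤ Λ * ‖z - w‖ := by
  intro z hz w hw
  refine Convex.norm_image_sub_le_of_norm_fderiv_le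
    (fun x hx => (hA x hx).differentiableAt (Metric.isOpen_ball.mem_nhds hx))
    (fun x hx => ?_) (convex_ball _ _) hw hz
  rw [← norm_deriv_eq_norm_fderiv]
  exact hA' x hx

private lemma keyLip (S : Finset ℕ) (hS1 : ∀ k ∈ S, 1 ≤ k) (Λ : ℕ → ℝ)
    (hΛ : ∀ k ∈ S, 0 ≤ Λ k) (A : ℕ → ℂ → ℂ)
    (hL : ∀ k ∈ S, ∀ z ∈ Metric.ball (0 : ℂ) 1, ∀ w ∈ Metric.ball (0 : ℂ) 1,
      ‖A k z - A k w‖ ≤ Λ k * ‖z - w‖)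
    (hA0 : ∀ k ∈ S, A k 0 = 0)
    (r : ℝ) (hr0 : 0 ≤ r) (hr1 : r < 1)
    (z w : ℂ) (hz : ‖z‖ ≤ r) (hw : ‖w‖ ≤ r) :
    ‖(∑ k ∈ S, (starRingEnd ℂ z) ^ k * A k z) - ∑ k ∈ S, (starRingEnd ℂ w) ^ k * A k w‖
      ≤ (∑ k ∈ S, ((k : ℝ) + 1) * Λ k * r ^ k) * ‖z - w‖ := by
  have hzb : z ∈ Metric.ball (0 : ℂ) 1 := by
    rw [mem_ball_zero_iff]; exact lt_of_le_of_lt hz hr1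
  have hwb : w ∈ Metric.ball (0 : ℂ) 1 := by
    rw [mem_ball_zero_iff]; exact lt_of_le_of_lt hw hr1
  rw [← Finset.sum_sub_distrib, Finset.sum_mul]
  refine le_trans (norm_sum_le _ _) (Finset.sum_le_sum fun k hk => ?_)
  have hk1 := hS1 k hk
  have hΛk := hΛ k hk
  have hd : (0:ℝ) ≤ ‖z - w‖ := norm_nonneg _
  have e1 : (starRingEnd ℂ z) ^ k * A k z - (starRingEnd ℂ w) ^ k * A k w
      = (starRingEnd ℂ z) ^ k * (A k z - A k w)
        + ((starRingEnd ℂ z) ^ k - (starRingEnd ℂ w) ^ k) * A k w := by ring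
  have hcz : ‖starRingEnd ℂ z‖ = ‖z‖ := RCLike.norm_conj z
  have hcw : ‖starRingEnd ℂ w‖ = ‖w‖ := RCLike.norm_conj w
  have h1 : ‖(starRingEnd ℂ z) ^ k * (A k z - A k w)‖ ≤ r ^ k * (Λ k * ‖z - w‖) := by
    rw [norm_mul, norm_pow, hcz]
    have := hL k hk z hzb w hwb
    have hzk : ‖z‖ ^ k ≤ r ^ k := pow_le_pow_left₀ (norm_nonneg _) hz k
    have h0 : (0:ℝ) ≤ ‖z‖ ^ k := pow_nonneg (norm_nonneg _) k
    exact mul_le_mul hzk this (norm_nonneg _) (pow_nonneg hr0 k)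
  have h2 : ‖((starRingEnd ℂ z) ^ k - (starRingEnd ℂ w) ^ k) * A k w‖
      ≤ ((k : ℝ) * r ^ (k - 1) * ‖z - w‖) * (Λ k * r) := by
    rw [norm_mul]
    have hp : ‖(starRingEnd ℂ z) ^ k - (starRingEnd ℂ w) ^ k‖
        ≤ (k : ℝ) * r ^ (k - 1) * ‖z - w‖ := by
      have := pow_sub_pow_norm_le (starRingEnd ℂ z) (starRingEnd ℂ w) r
        (by rw [hcz]; exact hz) (by rw [hcw]; exact hw) k
      have hcc : starRingEnd ℂ z - starRingEnd ℂ w = starRingEnd ℂ (z - w) := by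
        rw [map_sub]
      rwa [hcc, RCLike.norm_conj] at this
    have hAw : ‖A k w‖ ≤ Λ k * r := by
      have := hL k hk w hwb 0 (by simp)
      rw [hA0 k hk, sub_zero, sub_zero] at this
      exact le_trans this (by nlinarith)
    exact mul_le_mul hp hAw (norm_nonneg _)
      (by positivity)
  calc ‖(starRingEnd ℂ z) ^ k * A k z - (starRingEnd ℂ w) ^ k * A k w‖
      ≤ r ^ k * (Λ k * ‖z - w‖) + ((k : ℝ) * r ^ (k - 1) * ‖z - w‖) * (Λ k * r) := by
        rw [e1]; exact le_trans (norm_add_le _ _) (add_le_add h1 h2)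
    _ = ((k : ℝ) + 1) * Λ k * r ^ k * ‖z - w‖ := by
        have hrk : r ^ (k - 1) * r = r ^ k := by
          rw [← pow_succ]; congr 1; omega
        rw [← hrk]; ring

private lemma boundG (S : Finset ℕ) (hS1 : ∀ k ∈ S, 1 ≤ k) (Λ : ℕ → ℝ)
    (hΛ : ∀ k ∈ S, 0 ≤ Λ k) (A : ℕ → ℂ → ℂ)
    (hL : ∀ k ∈ S, ∀ z ∈ Metric.ball (0 : ℂ) 1, ∀ w ∈ Metric.ball (0 : ℂ) 1,
      ‖A k z - A k w‖ ≤ Λ k * ‖z - w‖)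
    (hA0 : ∀ k ∈ S, A k 0 = 0)
    (r : ℝ) (hr0 : 0 ≤ r) (hr1 : r < 1)
    (z : ℂ) (hz : ‖z‖ ≤ r) :
    ‖∑ k ∈ S, (starRingEnd ℂ z) ^ k * A k z‖ ≤ ∑ k ∈ S, Λ k * r ^ (k + 1) := by
  have hzb : z ∈ Metric.ball (0 : ℂ) 1 := by
    rw [mem_ball_zero_iff]; exact lt_of_le_of_lt hz hr1
  refine le_trans (norm_sum_le _ _) (Finset.sum_le_sum fun k hk => ?_)
  rw [norm_mul, norm_pow, RCLike.norm_conj]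
  have hAz : ‖A k z‖ ≤ Λ k * r := by
    have := hL k hk z hzb 0 (by simp)
    rw [hA0 k hk, sub_zero, sub_zero] at this
    exact le_trans this (by nlinarith [hΛ k hk])
  calc ‖z‖ ^ k * ‖A k z‖ ≤ r ^ k * (Λ k * r) :=
        mul_le_mul (pow_le_pow_left₀ (norm_nonneg _) hz k) hAz (norm_nonneg _)
          (pow_nonneg hr0 k)
    _ = Λ k * r ^ (k + 1) := by ring

theorem stmt9 (p : ℕ) (hp : 0 < p) (Λ : ℕ → ℝ)
    (hΛ : ∀ k ∈ Finset.Icc 1 (p - 1), 0 ≤ Λ k)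
    (hsum : 1 < ∑ k ∈ Finset.Icc 1 (p - 1), ((k : ℝ) + 1) * Λ k)
    (ρ₂ : ℝ) (hρ₂ : ρ₂ ∈ Set.Ioo (0 : ℝ) 1)
    (hroot : ∑ k ∈ Finset.Icc 1 (p - 1), ((k : ℝ) + 1) * Λ k * ρ₂ ^ k = 1)
    (A : ℕ → ℂ → ℂ)
    (hA : ∀ k ∈ Finset.Icc 1 (p - 1), DifferentiableOn ℂ (A k) (Metric.ball 0 1))
    (hA0 : ∀ k ∈ Finset.Icc 1 (p - 1), A k 0 = 0)
    (hAk' : ∀ k ∈ Finset.Icc 1 (p - 1), ∀ z ∈ Metric.ball (0 : ℂ) 1,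
      ‖deriv (A k) z‖ ≤ Λ k)
    (F : ℂ → ℂ)
    (hF : ∀ z, F z = z + ∑ k ∈ Finset.Icc 1 (p - 1), (starRingEnd ℂ z) ^ k * A k z) :
    Set.InjOn F (Metric.ball 0 ρ₂) ∧
    Metric.ball (0 : ℂ) (ρ₂ - ∑ k ∈ Finset.Icc 1 (p - 1), Λ k * ρ₂ ^ (k + 1))
      ⊆ F '' (Metric.ball 0 ρ₂) := by
  obtain ⟨hρ0, hρ1⟩ := hρ₂
  set S := Finset.Icc 1 (p - 1) with hS
  have hS1 : ∀ k ∈ S, 1 ≤ k := fun k hk => (Finset.mem_Icc.1 hk).1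
  have hL : ∀ k ∈ S, ∀ z ∈ Metric.ball (0 : ℂ) 1, ∀ w ∈ Metric.ball (0 : ℂ) 1,
      ‖A k z - A k w‖ ≤ Λ k * ‖z - w‖ := fun k hk => lipA (hA k hk) (hAk' k hk)
  -- there is a k₀ with positive term
  obtain ⟨k₀, hk₀S, hk₀⟩ : ∃ k ∈ S, 0 < ((k : ℝ) + 1) * Λ k * ρ₂ ^ k := by
    by_contra h
    push_neg at h
    have : (∑ k ∈ S, ((k : ℝ) + 1) * Λ k * ρ₂ ^ k) ≤ 0 :=
      Finset.sum_nonpos fun k hk => h k hk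
    rw [hroot] at this; linarith
  have hΛk₀ : 0 < Λ k₀ := by
    by_contra h
    push_neg at h
    nlinarith [pow_pos hρ0 k₀, pow_nonneg (le_of_lt hρ0) k₀,
      mul_nonneg (by positivity : (0:ℝ) ≤ (k₀:ℝ)+1) (pow_nonneg (le_of_lt hρ0) k₀)]
  -- strict bound on L r for r < ρ₂
  have hLr : ∀ r : ℝ, 0 ≤ r → r < ρ₂ →
      (∑ k ∈ S, ((k : ℝ) + 1) * Λ k * r ^ k) < 1 := by
    intro r hr0 hrρ
    have hlt : (∑ k ∈ S, ((k : ℝ) + 1) * Λ k * r ^ k)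
        < ∑ k ∈ S, ((k : ℝ) + 1) * Λ k * ρ₂ ^ k := by
      refine Finset.sum_lt_sum (fun k hk => ?_) ⟨k₀, hk₀S, ?_⟩
      · have hpow : r ^ k ≤ ρ₂ ^ k := pow_le_pow_left₀ hr0 (le_of_lt hrρ) k
        have h0 : (0:ℝ) ≤ ((k : ℝ) + 1) * Λ k :=
          mul_nonneg (by positivity) (hΛ k hk)
        exact mul_le_mul_of_nonneg_left hpow h0
      · have h0 : (0:ℝ) < ((k₀ : ℝ) + 1) * Λ k₀ :=
          mul_pos (by positivity) hΛk₀
        have hk0ne : k₀ ≠ 0 := by have := hS1 k₀ hk₀S; omega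
        exact mul_lt_mul_of_pos_left (pow_lt_pow_left₀ hrρ hr0 hk0ne) h0
    rw [hroot] at hlt
    exact hlt
  have hΛnn : ∀ k ∈ S, 0 ≤ Λ k := hΛ
  constructor
  · -- injectivity
    intro z hz w hw hEq
    by_contra hne
    rw [mem_ball_zero_iff] at hz hw
    set r := max ‖z‖ ‖w‖ with hr
    have hr0 : 0 ≤ r := le_trans (norm_nonneg z) (le_max_left _ _)
    have hrρ : r < ρ₂ := max_lt hz hw
    have hr1 : r < 1 := lt_trans hrρ hρ1
    have hkey := keyLip S hS1 Λ hΛnn A hL hA0 r hr0 hr1 z w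
      (le_max_left _ _) (le_max_right _ _)
    have hEq' : z + ∑ k ∈ S, (starRingEnd ℂ z) ^ k * A k z
        = w + ∑ k ∈ S, (starRingEnd ℂ w) ^ k * A k w := by
      rw [← hF z, ← hF w, hEq]
    have hzw : z - w = -((∑ k ∈ S, (starRingEnd ℂ z) ^ k * A k z)
        - ∑ k ∈ S, (starRingEnd ℂ w) ^ k * A k w) := by
      linear_combination hEq'
    have hnorm : ‖z - w‖ ≤ (∑ k ∈ S, ((k : ℝ) + 1) * Λ k * r ^ k) * ‖z - w‖ := by
      calc ‖z - w‖ = ‖(∑ k ∈ S, (starRingEnd ℂ z) ^ k * A k z)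
            - ∑ k ∈ S, (starRingEnd ℂ w) ^ k * A k w‖ := by rw [hzw, norm_neg]
        _ ≤ _ := hkey
    have hpos : 0 < ‖z - w‖ := by
      rw [norm_pos_iff]
      exact sub_ne_zero.mpr hne
    nlinarith [hLr r hr0 hrρ]
  · -- covering
    intro w hw
    rw [mem_ball_zero_iff] at hw
    set G : ℂ → ℂ := fun z => ∑ k ∈ S, (starRingEnd ℂ z) ^ k * A k z with hG
    set h : ℝ → ℝ := fun r => r - ∑ k ∈ S, Λ k * r ^ (k + 1) with hh
    have hcont : Continuous h :=
      continuous_id.sub (continuous_finset_sum S fun k _ =>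
        continuous_const.mul (continuous_pow (k + 1)))
    have hwρ : ‖w‖ < h ρ₂ := hw
    have hev : ∀ᶠ r in nhds ρ₂, ‖w‖ < h r :=
      (hcont.continuousAt).eventually (eventually_gt_nhds hwρ)
    have hmemcl : ρ₂ ∈ closure (Set.Ioo (0:ℝ) ρ₂) := by
      rw [closure_Ioo (ne_of_lt hρ0)]
      exact ⟨le_of_lt hρ0, le_refl ρ₂⟩
    haveI : (nhdsWithin ρ₂ (Set.Ioo (0:ℝ) ρ₂)).NeBot :=
      mem_closure_iff_nhdsWithin_neBot.1 hmemcl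
    obtain ⟨r, hrw, hrmem⟩ :=
      (((hev.filter_mono (nhdsWithin_le_nhds (s := Set.Ioo (0:ℝ) ρ₂))).and
        self_mem_nhdsWithin)).exists
    obtain ⟨hr0, hrρ⟩ := hrmem
    have hr1 : r < 1 := lt_trans hrρ hρ1
    set s : Set ℂ := Metric.closedBall (0 : ℂ) r with hs
    have hGb : ∀ z ∈ s, ‖G z‖ ≤ ∑ k ∈ S, Λ k * r ^ (k + 1) := by
      intro z hzs
      rw [hs, Metric.mem_closedBall, dist_zero_right] at hzs
      exact boundG S hS1 Λ hΛnn A hL hA0 r (le_of_lt hr0) hr1 z hzs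
    have hmaps : Set.MapsTo (fun z => w - G z) s s := by
      intro z hzs
      have h1 := hGb z hzs
      rw [hs, Metric.mem_closedBall, dist_zero_right]
      calc ‖w - G z‖ ≤ ‖w‖ + ‖G z‖ := norm_sub_le _ _
        _ ≤ r := by
            have : ‖w‖ < r - ∑ k ∈ S, Λ k * r ^ (k + 1) := hrw
            linarith
    have hKnn : 0 ≤ ∑ k ∈ S, ((k : ℝ) + 1) * Λ k * r ^ k :=
      Finset.sum_nonneg fun k hk =>
        mul_nonneg (mul_nonneg (by positivity) (hΛ k hk)) (pow_nonneg (le_of_lt hr0) k)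
    set K : NNReal := ⟨∑ k ∈ S, ((k : ℝ) + 1) * Λ k * r ^ k, hKnn⟩ with hK
    have hlip : LipschitzOnWith K (fun z => w - G z) s := by
      apply LipschitzOnWith.of_dist_le_mul
      intro x hx y hy
      rw [hs, Metric.mem_closedBall, dist_zero_right] at hx hy
      have hkey := keyLip S hS1 Λ hΛnn A hL hA0 r (le_of_lt hr0) hr1 x y hx hy
      rw [dist_eq_norm, dist_eq_norm]
      have e : (w - G x) - (w - G y) = -(G x - G y) := by ring
      rw [e, norm_neg]
      exact hkey
    have hcontr : ContractingWith K (hmaps.restrict _ s s) := by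
      constructor
      · have : (K : ℝ) < 1 := hLr r (le_of_lt hr0) hrρ
        exact_mod_cast this
      · exact hlip.mapsToRestrict hmaps
    have hsc : IsComplete s := Metric.isClosed_closedBall.isComplete
    have h0s : (0 : ℂ) ∈ s := by
      rw [hs, Metric.mem_closedBall, dist_zero_right, norm_zero]
      exact le_of_lt hr0
    obtain ⟨z, hzs, hfix, -, -⟩ :=
      hcontr.exists_fixedPoint' hsc hmaps h0s (edist_ne_top _ _)
    refine ⟨z, ?_, ?_⟩
    · rw [mem_ball_zero_iff]
      rw [hs, Metric.mem_closedBall, dist_zero_right] at hzs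
      exact lt_of_le_of_lt hzs hrρ
    · have hfix' : w - G z = z := hfix
      rw [hF z]
      have : (∑ k ∈ S, (starRingEnd ℂ z) ^ k * A k z) = G z := rfl
      rw [this]
      linear_combination -hfix'
end

section
/- For the function F₂(z) = z - Σ_{k=1}^{p-1} Λ_k conj(z)^k z (with Λ₁,…,Λ_{p-1} ≥ 0 and Σ_{k=1}^{p-1}(k+1)Λ_k > 1, and ρ₂ ∈ (0,1) the root of Σ(k+1)Λ_k r^k = 1), F₂ is not injective on any disk {|z| < r} with ρ₂ < r ≤ 1. -/
theorem stmt10 (p : ℕ) (hp : 0 < p) (Λ : ℕ → ℝ)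
    (hΛ : ∀ k ∈ Finset.Icc 1 (p - 1), 0 ≤ Λ k)
    (hsum : 1 < ∑ k ∈ Finset.Icc 1 (p - 1), ((k : ℝ) + 1) * Λ k)
    (ρ₂ : ℝ) (hρ₂ : ρ₂ ∈ Set.Ioo (0 : ℝ) 1)
    (hroot : ∑ k ∈ Finset.Icc 1 (p - 1), ((k : ℝ) + 1) * Λ k * ρ₂ ^ k = 1)
    (F₂ : ℂ → ℂ)
    (hF₂ : ∀ z, F₂ z = z - ∑ k ∈ Finset.Icc 1 (p - 1),
      ((Λ k : ℝ) : ℂ) * (starRingEnd ℂ z) ^ k * z) :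
    ∀ r : ℝ, ρ₂ < r → r ≤ 1 → ¬ Set.InjOn F₂ (Metric.ball 0 r) := by
  intro r hr hr1 hinj
  obtain ⟨hρ0, hρ1⟩ := hρ₂
  set S := Finset.Icc 1 (p - 1)
  set g : ℝ → ℝ := fun x => x - ∑ k ∈ S, Λ k * x ^ (k + 1) with hg
  -- F₂ agrees with g on the reals
  have hFg : ∀ x : ℝ, F₂ (x : ℂ) = ((g x : ℝ) : ℂ) := by
    intro x
    rw [hF₂, hg]
    push_cast
    congr 1
    refine Finset.sum_congr rfl fun k hk => ?_
    rw [Complex.conj_ofReal]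
    ring
  have hg0 : g 0 = 0 := by
    simp [hg]
  -- x₂
  set x₂ : ℝ := (ρ₂ + r) / 2 with hx₂
  have hx₂gt : ρ₂ < x₂ := by simp [hx₂]; linarith
  have hx₂lt : x₂ < r := by simp [hx₂]; linarith
  have hx₂pos : 0 < x₂ := lt_trans hρ0 hx₂gt
  -- derivative of g
  have hderiv : ∀ x : ℝ, HasDerivAt g (1 - ∑ k ∈ S, Λ k * ((k + 1) * x ^ k)) x := by
    intro x
    have h1 : HasDerivAt (fun x : ℝ => x) 1 x := hasDerivAt_id x
    have h2 : HasDerivAt (fun x : ℝ => ∑ k ∈ S, Λ k * x ^ (k + 1))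
        (∑ k ∈ S, Λ k * ((k + 1 : ℕ) * x ^ k)) x := by
      refine HasDerivAt.fun_sum fun k hk => ?_
      exact (hasDerivAt_pow (k + 1) x).const_mul (Λ k)
    have := h1.fun_sub h2
    refine this.congr_deriv ?_
    push_cast
    ring
  -- deriv nonpos for x ≥ ρ₂
  have hderiv_nonpos : ∀ x ∈ Set.Icc ρ₂ x₂, deriv g x ≤ 0 := by
    intro x hx
    rw [(hderiv x).deriv]
    have key : ∑ k ∈ S, ((k:ℝ) + 1) * Λ k * ρ₂ ^ k ≤ ∑ k ∈ S, Λ k * (((k:ℝ) + 1) * x ^ k) := by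
      refine Finset.sum_le_sum fun k hk => ?_
      have hΛk := hΛ k hk
      have hpow : ρ₂ ^ k ≤ x ^ k := pow_le_pow_left₀ (le_of_lt hρ0) hx.1 k
      nlinarith [mul_nonneg hΛk (sub_nonneg.mpr hpow), Nat.cast_nonneg (α := ℝ) k]
    linarith [hroot]
  have hgcont : Continuous g := by
    apply Continuous.sub continuous_id
    exact continuous_finset_sum S fun k _ => continuous_const.mul (continuous_pow (k + 1))
  -- g antitone on [ρ₂, x₂]
  have hant : AntitoneOn g (Set.Icc ρ₂ x₂) := by
    apply antitoneOn_of_deriv_nonpos (convex_Icc ρ₂ x₂) hgcont.continuousOn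
    · intro x hx
      exact (hderiv x).differentiableAt.differentiableWithinAt
    · intro x hx
      exact hderiv_nonpos x (interior_subset hx)
  -- g ρ₂ ≥ ρ₂/2 > 0
  have hgρ : ρ₂ / 2 ≤ g ρ₂ := by
    have hsum2 : ∑ k ∈ S, Λ k * ρ₂ ^ (k + 1) ≤ ρ₂ / 2 := by
      have : ∑ k ∈ S, Λ k * ρ₂ ^ (k + 1) ≤ ∑ k ∈ S, ((k : ℝ) + 1) * Λ k * ρ₂ ^ k * (ρ₂ / 2) := by
        refine Finset.sum_le_sum fun k hk => ?_
        have hk1 : 1 ≤ k := (Finset.mem_Icc.mp hk).1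
        have hΛk := hΛ k hk
        have hpow : (0:ℝ) ≤ ρ₂ ^ k := pow_nonneg (le_of_lt hρ0) k
        have h2k : (2:ℝ) ≤ (k : ℝ) + 1 := by
          have : (1:ℝ) ≤ (k:ℝ) := by exact_mod_cast hk1
          linarith
        have : Λ k * ρ₂ ^ (k + 1) = Λ k * ρ₂ ^ k * ρ₂ := by ring
        rw [this]
        nlinarith [mul_nonneg (mul_nonneg hΛk hpow) (le_of_lt hρ0)]
      rw [← Finset.sum_mul, hroot] at this
      linarith
    simp only [hg]
    linarith
  have hgρpos : 0 < g ρ₂ := lt_of_lt_of_le (by linarith) hgρ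
  -- memberships in ball
  have hmem : ∀ x : ℝ, 0 ≤ x → x < r → (x : ℂ) ∈ Metric.ball (0 : ℂ) r := by
    intro x hx0 hxr
    rw [Metric.mem_ball, dist_zero_right, Complex.norm_real, Real.norm_eq_abs, abs_of_nonneg hx0]
    exact hxr
  by_cases hcase : 0 ≤ g x₂
  · -- g x₂ ∈ [g 0, g ρ₂], find c ∈ [0, ρ₂] with g c = g x₂
    have hle : g x₂ ≤ g ρ₂ := hant (Set.left_mem_Icc.mpr (le_of_lt hx₂gt))
      (Set.right_mem_Icc.mpr (le_of_lt hx₂gt)) (le_of_lt hx₂gt)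
    have hivt := intermediate_value_Icc (le_of_lt hρ0) hgcont.continuousOn
    have : g x₂ ∈ Set.Icc (g 0) (g ρ₂) := by rw [hg0]; exact ⟨hcase, hle⟩
    obtain ⟨c, hc, hgc⟩ := hivt this
    have hc2 : (c : ℂ) ≠ (x₂ : ℂ) := by
      intro h
      have : c = x₂ := by exact_mod_cast h
      linarith [hc.2]
    apply hc2
    apply hinj (hmem c hc.1 (lt_of_le_of_lt hc.2 (lt_trans hx₂gt hx₂lt)))
      (hmem x₂ (le_of_lt hx₂pos) hx₂lt)
    rw [hFg, hFg, hgc]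
  · -- g x₂ < 0 < g ρ₂, find c ∈ [ρ₂, x₂] with g c = 0 = g 0
    push_neg at hcase
    have hivt := intermediate_value_Icc' (le_of_lt hx₂gt) hgcont.continuousOn
    have : (0:ℝ) ∈ Set.Icc (g x₂) (g ρ₂) := ⟨le_of_lt hcase, le_of_lt hgρpos⟩
    obtain ⟨c, hc, hgc⟩ := hivt this
    have hcpos : 0 < c := lt_of_lt_of_le hρ0 hc.1
    have hc2 : ((0:ℝ) : ℂ) ≠ (c : ℂ) := by
      intro h
      have : (0:ℝ) = c := by exact_mod_cast h
      linarith
    apply hc2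
    apply hinj (hmem 0 le_rfl (by linarith)) (hmem c (le_of_lt hcpos) (lt_of_le_of_lt hc.2 hx₂lt))
    rw [hFg, hFg, hg0, hgc]
end

section
/- Let Λ₀ > 1 and define g(x) = Λ₀²x - Σ_{k=1}^{p-1} Λ_k x^{k+1} + (Λ₀³-Λ₀)ln(1 - x/Λ₀) on [0,1], with Λ₁,…,Λ_{p-1} ≥ 0. Let ρ₁ ∈ (0,1) satisfy Λ₀(1-Λ₀ρ₁)/(Λ₀-ρ₁) = Σ_{k=1}^{p-1}(k+1)Λ_k ρ₁^k. Then g'(x) = 0 on [0,1] iff x = ρ₁, g is strictly increasing on [0,ρ₁] and strictly decreasing on [ρ₁,1], and g(ρ₁) > 0. -/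
theorem stmt11 (p : ℕ) (hp : 0 < p) (Λ : ℕ → ℝ) (hΛ0 : 1 < Λ 0)
    (hΛ : ∀ k ∈ Finset.Icc 1 (p - 1), 0 ≤ Λ k)
    (ρ₁ : ℝ) (hρ₁ : ρ₁ ∈ Set.Ioo (0 : ℝ) 1)
    (hroot : Λ 0 * (1 - Λ 0 * ρ₁) / (Λ 0 - ρ₁)
      = ∑ k ∈ Finset.Icc 1 (p - 1), ((k : ℝ) + 1) * Λ k * ρ₁ ^ k)
    (g : ℝ → ℝ)
    (hg : ∀ x, g x = (Λ 0) ^ 2 * x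
      - (∑ k ∈ Finset.Icc 1 (p - 1), Λ k * x ^ (k + 1))
      + ((Λ 0) ^ 3 - Λ 0) * Real.log (1 - x / Λ 0)) :
    (∀ x ∈ Set.Icc (0 : ℝ) 1, deriv g x = 0 ↔ x = ρ₁) ∧
    StrictMonoOn g (Set.Icc 0 ρ₁) ∧
    StrictAntiOn g (Set.Icc ρ₁ 1) ∧
    0 < g ρ₁ := by
  set c := Λ 0 with hc
  have hc0 : (0:ℝ) < c := lt_trans one_pos hΛ0
  set S : ℝ → ℝ := fun x => ∑ k ∈ Finset.Icc 1 (p-1), ((k:ℝ)+1) * Λ k * x ^ k with hS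
  set h : ℝ → ℝ := fun x => c * (1 - c*x)/(c - x) - S x with hh
  have hcx : ∀ x : ℝ, x ≤ 1 → 0 < c - x := fun x hx => by linarith
  have hgfun : g = fun y => c^2*y - (∑ k ∈ Finset.Icc 1 (p-1), Λ k * y^(k+1))
      + (c^3 - c)*Real.log (1 - y/c) := funext hg
  have hd : ∀ x : ℝ, x ≤ 1 → HasDerivAt g (h x) x := by
    intro x hx
    have hcxpos := hcx x hx
    have h1 : (1 : ℝ) - x / c ≠ 0 := by
      have he : 1 - x/c = (c - x)/c := by field_simp
      rw [he]
      positivity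
    have hlog : HasDerivAt (fun y : ℝ => Real.log (1 - y / c)) ((-(1/c))/(1 - x/c)) x := by
      have hinner : HasDerivAt (fun y : ℝ => 1 - y / c) (-(1/c)) x := by
        simpa using ((hasDerivAt_id x).div_const c).const_sub 1
      exact hinner.log h1
    have hsum : HasDerivAt (fun y : ℝ => ∑ k ∈ Finset.Icc 1 (p-1), Λ k * y^(k+1))
        (∑ k ∈ Finset.Icc 1 (p-1), Λ k * (((k:ℝ)+1) * x^k)) x := by
      have := HasDerivAt.fun_sum (fun k (_ : k ∈ Finset.Icc 1 (p-1)) =>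
        (hasDerivAt_pow (k+1) x).const_mul (Λ k))
      refine this.congr_deriv (Finset.sum_congr rfl fun k _ => ?_)
      push_cast
      ring_nf
    have hmain : HasDerivAt g
        (c^2*1 - (∑ k ∈ Finset.Icc 1 (p-1), Λ k * (((k:ℝ)+1) * x^k))
          + (c^3 - c)*((-(1/c))/(1 - x/c))) x := by
      rw [hgfun]
      exact (((hasDerivAt_id x).const_mul (c^2)).sub hsum).add (hlog.const_mul (c^3 - c))
    have hkey : c^2*1 - (∑ k ∈ Finset.Icc 1 (p-1), Λ k * (((k:ℝ)+1) * x^k))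
          + (c^3 - c)*((-(1/c))/(1 - x/c)) = h x := by
      have hsum_eq : ∑ k ∈ Finset.Icc 1 (p-1), Λ k * (((k:ℝ)+1) * x^k) = S x :=
        Finset.sum_congr rfl (fun k _ => by ring)
      rw [hsum_eq, hh]
      have hne : c - x ≠ 0 := ne_of_gt hcxpos
      have hcne : c ≠ 0 := ne_of_gt hc0
      field_simp
      ring
    rwa [hkey] at hmain
  have hanti : ∀ x y : ℝ, 0 ≤ x → x < y → y ≤ 1 → h y < h x := by
    intro x y hx hxy hy1
    have hcy := hcx y hy1
    have hcxp := hcx x (le_of_lt (lt_of_lt_of_le hxy hy1))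
    have hSle : S x ≤ S y := by
      apply Finset.sum_le_sum
      intro k hk
      have hΛk := hΛ k hk
      have hpk : x^k ≤ y^k := pow_le_pow_left₀ hx (le_of_lt hxy) k
      have hco : (0:ℝ) ≤ ((k:ℝ)+1) * Λ k := by positivity
      exact mul_le_mul_of_nonneg_left hpk hco
    have hφ : c*(1-c*y)/(c-y) < c*(1-c*x)/(c-x) := by
      rw [div_lt_div_iff₀ hcy hcxp]
      have h1 : 0 < (y - x)*(c^2 - 1) := by
        apply mul_pos (by linarith)
        nlinarith
      nlinarith [mul_pos hc0 h1]
    simp only [hh]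
    linarith
  have hρ0 : h ρ₁ = 0 := by
    simp only [hh, hS]
    rw [← hroot]
    ring
  have hg0 : g 0 = 0 := by
    rw [hg 0]
    norm_num
  have hmono : StrictMonoOn g (Set.Icc 0 ρ₁) := by
    apply strictMonoOn_of_deriv_pos (convex_Icc _ _)
    · intro x hx
      exact (hd x (le_trans hx.2 (le_of_lt hρ₁.2))).continuousAt.continuousWithinAt
    · intro x hx
      rw [interior_Icc] at hx
      rw [(hd x (by linarith [hx.2, hρ₁.2])).deriv]
      have := hanti x ρ₁ (le_of_lt hx.1) hx.2 (le_of_lt hρ₁.2)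
      rw [hρ0] at this
      exact this
  refine ⟨?_, hmono, ?_, ?_⟩
  · intro x hx
    rw [(hd x hx.2).deriv]
    constructor
    · intro hx0
      by_contra hne
      rcases lt_or_gt_of_ne hne with hlt | hgt
      · have := hanti x ρ₁ hx.1 hlt (le_of_lt hρ₁.2)
        rw [hρ0] at this
        linarith
      · have := hanti ρ₁ x (le_of_lt hρ₁.1) hgt hx.2
        rw [hρ0] at this
        linarith
    · intro hxe
      rw [hxe, hρ0]
  · apply strictAntiOn_of_deriv_neg (convex_Icc _ _)
    · intro x hx
      exact (hd x hx.2).continuousAt.continuousWithinAt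
    · intro x hx
      rw [interior_Icc] at hx
      rw [(hd x (le_of_lt hx.2)).deriv]
      have := hanti ρ₁ x (le_of_lt hρ₁.1) hx.1 (le_of_lt hx.2)
      rw [hρ0] at this
      linarith
  · have := hmono (Set.left_mem_Icc.mpr (le_of_lt hρ₁.1))
      (Set.right_mem_Icc.mpr (le_of_lt hρ₁.1)) hρ₁.1
    rwa [hg0] at this
end

section
/- Suppose Λ₀ > 1, Λ₁,…,Λ_{p-1} ≥ 0, and ρ₁ ∈ (0, 1/Λ₀] is the unique root of Λ₀(1-Λ₀r)/(Λ₀-r) - Σ_{k=1}^{p-1}(k+1)Λ_k r^k = 0. Let σ₁ = Λ₀²ρ₁ - Σ_{k=1}^{p-1} Λ_k ρ₁^{k+1} + (Λ₀³-Λ₀)ln(1 - ρ₁/Λ₀). Then 0 < σ₁ < 1; in fact σ₁ < 1/Λ₀. -/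
theorem stmt12 (p : ℕ) (hp : 0 < p) (Λ : ℕ → ℝ) (hΛ0 : 1 < Λ 0)
    (hΛ : ∀ k ∈ Finset.Icc 1 (p - 1), 0 ≤ Λ k)
    (ρ₁ : ℝ) (hρ₁ : ρ₁ ∈ Set.Ioc 0 (1 / Λ 0))
    (hroot : Λ 0 * (1 - Λ 0 * ρ₁) / (Λ 0 - ρ₁)
      = ∑ k ∈ Finset.Icc 1 (p - 1), ((k : ℝ) + 1) * Λ k * ρ₁ ^ k)
    (σ₁ : ℝ)
    (hσ₁ : σ₁ = (Λ 0) ^ 2 * ρ₁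
      - (∑ k ∈ Finset.Icc 1 (p - 1), Λ k * ρ₁ ^ (k + 1))
      + ((Λ 0) ^ 3 - Λ 0) * Real.log (1 - ρ₁ / Λ 0)) :
    0 < σ₁ ∧ σ₁ < 1 / Λ 0 ∧ σ₁ < 1 := by
  obtain ⟨hr0, hr1⟩ := hρ₁
  have hL0 : (0:ℝ) < Λ 0 := lt_trans one_pos hΛ0
  have hrL : ρ₁ * Λ 0 ≤ 1 := (le_div_iff₀ hL0).mp hr1
  have hrlt1 : ρ₁ < 1 := by nlinarith
  have hd : 0 < Λ 0 - ρ₁ := by linarith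
  set R := ∑ k ∈ Finset.Icc 1 (p - 1), ((k : ℝ) + 1) * Λ k * ρ₁ ^ k with hRdef
  set S := ∑ k ∈ Finset.Icc 1 (p - 1), Λ k * ρ₁ ^ (k + 1) with hSdef
  have hR0 : 0 ≤ R := by
    apply Finset.sum_nonneg
    intro k hk
    have hk0 := hΛ k hk
    have : (0:ℝ) ≤ ρ₁ ^ k := pow_nonneg hr0.le k
    positivity
  have hS0 : 0 ≤ S := by
    apply Finset.sum_nonneg
    intro k hk
    have hk0 := hΛ k hk
    positivity
  have hSR : S ≤ ρ₁ / 2 * R := by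
    rw [hSdef, hRdef, Finset.mul_sum]
    apply Finset.sum_le_sum
    intro k hk
    have hk0 := hΛ k hk
    have hk1 : 1 ≤ k := (Finset.mem_Icc.mp hk).1
    have hk1' : (1:ℝ) ≤ (k:ℝ) := by exact_mod_cast hk1
    have hpk : (0:ℝ) ≤ ρ₁ ^ k := pow_nonneg hr0.le k
    rw [pow_succ]
    nlinarith [mul_nonneg (mul_nonneg (mul_nonneg (sub_nonneg.mpr hk1') hk0) hpk) hr0.le]
  have hrootd : Λ 0 * (1 - Λ 0 * ρ₁) = R * (Λ 0 - ρ₁) := (div_eq_iff hd.ne').mp hroot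
  set x := ρ₁ / Λ 0 with hx
  have hx0 : 0 < x := div_pos hr0 hL0
  have hx1 : x < 1 := (div_lt_one hL0).mpr (by linarith)
  have h1x : 0 < 1 - x := by linarith
  have logub : Real.log (1 - x) < -x := by
    have := Real.log_lt_sub_one_of_pos h1x (by linarith : (1:ℝ) - x ≠ 1)
    linarith
  have loglb : -(ρ₁ / (Λ 0 - ρ₁)) < Real.log (1 - x) := by
    have hne : (1 - x)⁻¹ ≠ 1 := by
      rw [Ne, inv_eq_one]
      exact ne_of_lt (by linarith)
    have h2 := Real.log_lt_sub_one_of_pos (inv_pos.mpr h1x) hne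
    rw [Real.log_inv] at h2
    have heq : (1 - x)⁻¹ - 1 = ρ₁ / (Λ 0 - ρ₁) := by
      rw [hx]
      field_simp
      ring
    linarith
  have hc : 0 < (Λ 0) ^ 3 - Λ 0 := by nlinarith
  have key : (Λ 0) ^ 2 * ρ₁ - ((Λ 0) ^ 3 - Λ 0) * (ρ₁ / (Λ 0 - ρ₁)) = ρ₁ * R := by
    field_simp
    linear_combination hrootd
  have hlog1 : ((Λ 0) ^ 3 - Λ 0) * (-(ρ₁ / (Λ 0 - ρ₁))) < ((Λ 0) ^ 3 - Λ 0) * Real.log (1 - x) :=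
    mul_lt_mul_of_pos_left loglb hc
  have hlog2 : ((Λ 0) ^ 3 - Λ 0) * Real.log (1 - x) < ((Λ 0) ^ 3 - Λ 0) * (-x) :=
    mul_lt_mul_of_pos_left logub hc
  have hcx : ((Λ 0) ^ 3 - Λ 0) * x = ((Λ 0) ^ 2 - 1) * ρ₁ := by
    rw [hx]
    field_simp
  have hrR : 0 ≤ ρ₁ * R := mul_nonneg hr0.le hR0
  have h1 : 0 < σ₁ := by
    rw [hσ₁]
    nlinarith [hlog1, key, hSR, hrR]
  have h2 : σ₁ < 1 / Λ 0 := by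
    have : σ₁ < ρ₁ - S := by
      rw [hσ₁]
      nlinarith [hlog2, hcx]
    calc σ₁ < ρ₁ - S := this
      _ ≤ ρ₁ := by linarith
      _ ≤ 1 / Λ 0 := hr1
  exact ⟨h1, h2, lt_trans h2 ((div_lt_one hL0).mpr hΛ0)⟩
end

section
/- Let M₀,…,M_{p-1} > 1, each A_k analytic on U with A_k(0)=0, A_k'(0)=1, |A_k(z)| ≤ M_k on U, and ρ₃ ∈ (0,1) as in the Landau theorem. Then for every z with |z| = ρ₃, |Σ_{k=0}^{p-1} conj(z)^k A_k(z)| ≥ ρ₃ - ρ₃²(1-ρ₃^{p-1})/(1-ρ₃) - Σ_{k=0}^{p-1}(M_k - 1/M_k)·ρ₃^{k+2}/(1-ρ₃). -/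
open Metric

lemma normsq_complex (u : ℂ) : ‖u‖^2 = u.re^2 + u.im^2 := by
  rw [Complex.sq_norm, Complex.normSq_apply]; ring

lemma schwarzM (f : ℂ → ℂ) (M : ℝ)
    (hd : DifferentiableOn ℂ f (Metric.ball 0 1)) (h0 : f 0 = 0)
    (hb : ∀ z ∈ Metric.ball (0:ℂ) 1, ‖f z‖ ≤ M) :
    ∀ z ∈ Metric.ball (0:ℂ) 1, ‖f z‖ ≤ M * ‖z‖ := by
  intro z hz
  have key : ∀ M' : ℝ, M < M' → ‖f z‖ ≤ M' * ‖z‖ := by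
    intro M' hM'
    have hmaps : Set.MapsTo f (Metric.ball 0 1) (Metric.ball (f 0) M') := by
      intro w hw
      simp only [h0, Metric.mem_ball, dist_eq_norm, sub_zero]
      exact lt_of_le_of_lt (hb w hw) hM'
    have := Complex.dist_le_div_mul_dist_of_mapsTo_ball hd (hmaps.mono_right Metric.ball_subset_closedBall) hz
    simpa [h0, dist_eq_norm] using this
  rcases eq_or_ne z 0 with rfl | hz0
  · simp [h0]
  by_contra hcon
  push_neg at hcon
  have hzpos : 0 < ‖z‖ := norm_pos_iff.mpr hz0
  have hq : (‖f z‖ / ‖z‖) * ‖z‖ = ‖f z‖ := div_mul_cancel₀ _ hzpos.ne'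
  have h2 : M < ‖f z‖ / ‖z‖ := (lt_div_iff₀ hzpos).mpr (by linarith)
  have h3 := key ((M + ‖f z‖ / ‖z‖) / 2) (by linarith)
  nlinarith [h3, hq, hzpos, h2]

lemma landau_pointwise (f : ℂ → ℂ) (M : ℝ) (hM : 1 < M)
    (hd : DifferentiableOn ℂ f (Metric.ball 0 1)) (h0 : f 0 = 0) (h1 : deriv f 0 = 1)
    (hb : ∀ z ∈ Metric.ball (0:ℂ) 1, ‖f z‖ ≤ M) (z : ℂ) (hz : z ∈ Metric.ball (0:ℂ) 1) :
    ‖f z - z‖ ≤ (M - 1/M) * ‖z‖^2 / (1 - ‖z‖) := by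
  have hM0 : (0:ℝ) < M := by linarith
  have hz1 : ‖z‖ < 1 := by simpa [Metric.mem_ball, dist_eq_norm] using hz
  set h : ℂ → ℂ := dslope f 0 with hh
  have hhd : DifferentiableOn ℂ h (Metric.ball 0 1) :=
    (Complex.differentiableOn_dslope (isOpen_ball.mem_nhds (by simp))).mpr hd
  have hh0 : h 0 = 1 := by simp [hh, dslope_same, h1]
  have hfb := schwarzM f M hd h0 hb
  have hhval : ∀ w : ℂ, w ≠ 0 → h w = f w / w := by
    intro w hw0
    rw [hh, dslope_of_ne _ hw0, slope_def_field]
    simp [h0]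
  have hhb : ∀ w ∈ Metric.ball (0:ℂ) 1, ‖h w‖ ≤ M := by
    intro w hw
    rcases eq_or_ne w 0 with rfl | hw0
    · rw [hh0]; simp; linarith
    · rw [hhval w hw0, norm_div, div_le_iff₀ (norm_pos_iff.mpr hw0)]
      exact hfb w hw
  set g : ℂ → ℂ := fun w => (M:ℂ)^2 * (h w - 1) / ((M:ℂ)^2 - h w) with hg
  have hden : ∀ w ∈ Metric.ball (0:ℂ) 1, (M:ℂ)^2 - h w ≠ 0 := by
    intro w hw
    have hlt : ‖h w‖ < ‖((M:ℂ)^2)‖ := by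
      rw [norm_pow, Complex.norm_real, Real.norm_of_nonneg hM0.le]
      exact lt_of_le_of_lt (hhb w hw) (by nlinarith)
    intro hc
    rw [sub_eq_zero] at hc
    rw [hc] at hlt
    exact lt_irrefl _ hlt
  have hgd : DifferentiableOn ℂ g (Metric.ball 0 1) := by
    apply DifferentiableOn.div
    · exact (differentiableOn_const _).mul (hhd.sub (differentiableOn_const _))
    · exact (differentiableOn_const _).sub hhd
    · exact hden
  have hg0 : g 0 = 0 := by simp [hg, hh0]
  have hgb : ∀ w ∈ Metric.ball (0:ℂ) 1, ‖g w‖ ≤ M := by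
    intro w hw
    have hwM : ‖h w‖ ≤ M := hhb w hw
    have hdpos : 0 < ‖(M:ℂ)^2 - h w‖ := norm_pos_iff.mpr (hden w hw)
    rw [hg]
    simp only
    rw [norm_div, div_le_iff₀ hdpos]
    have hc : ((M:ℂ))^2 = ((M^2 : ℝ) : ℂ) := by push_cast; ring
    have e1 : ‖(M:ℂ)^2 * (h w - 1)‖^2 = M^4 * (((h w).re - 1)^2 + (h w).im^2) := by
      rw [norm_mul, mul_pow, hc, Complex.norm_real, Real.norm_of_nonneg (by positivity), normsq_complex]
      simp only [Complex.sub_re, Complex.sub_im, Complex.one_re, Complex.one_im]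
      ring
    have e2 : ‖(M:ℂ)^2 - h w‖^2 = (M^2 - (h w).re)^2 + (h w).im^2 := by
      rw [hc, normsq_complex]
      simp only [Complex.sub_re, Complex.sub_im, Complex.ofReal_re, Complex.ofReal_im]
      ring
    have e3 : (h w).re^2 + (h w).im^2 ≤ M^2 := by
      have := normsq_complex (h w)
      nlinarith [hwM, norm_nonneg (h w)]
    have key : ‖(M:ℂ)^2 * (h w - 1)‖^2 ≤ (M * ‖(M:ℂ)^2 - h w‖)^2 := by
      rw [e1, mul_pow, e2]
      nlinarith [mul_nonneg (mul_nonneg (sq_nonneg M) (by nlinarith : (0:ℝ) ≤ M^2 - 1)) (by nlinarith : (0:ℝ) ≤ M^2 - ((h w).re^2 + (h w).im^2))]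
    exact le_of_pow_le_pow_left₀ two_ne_zero (by positivity) key
  -- Schwarz for g
  have hgs := schwarzM g M hgd hg0 hgb
  -- derive bound on ‖h z - 1‖
  have hdenz := hden z hz
  have hzM : ‖h z‖ ≤ M := hhb z hz
  have hgz : ‖g z‖ ≤ M * ‖z‖ := hgs z hz
  have hnum : M^2 * ‖h z - 1‖ = ‖g z‖ * ‖(M:ℂ)^2 - h z‖ := by
    rw [hg]
    simp only
    rw [norm_div, div_mul_cancel₀ _ (norm_ne_zero_iff.mpr hdenz), norm_mul]
    congr 1
    rw [norm_pow, Complex.norm_real, Real.norm_of_nonneg hM0.le]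
  have htri : ‖(M:ℂ)^2 - h z‖ ≤ (M^2 - 1) + ‖h z - 1‖ := by
    have : (M:ℂ)^2 - h z = (((M^2 - 1 : ℝ)) : ℂ) - (h z - 1) := by push_cast; ring
    rw [this]
    refine le_trans (norm_sub_le _ _) ?_
    rw [Complex.norm_real, Real.norm_of_nonneg (by nlinarith)]
  have hw1 : ‖h z - 1‖ * (M - ‖z‖) ≤ ‖z‖ * (M^2 - 1) := by
    have h4 : M^2 * ‖h z - 1‖ ≤ M * ‖z‖ * ((M^2 - 1) + ‖h z - 1‖) := by
      rw [hnum]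
      exact mul_le_mul hgz htri (norm_nonneg _) (by positivity)
    nlinarith [norm_nonneg (h z - 1), norm_nonneg z]
  -- conclude
  have hMz : 0 < M - ‖z‖ := by nlinarith [norm_nonneg z]
  rcases eq_or_ne z 0 with rfl | hz0
  · simp [h0]
  have hfz : f z - z = z * (h z - 1) := by
    rw [hhval z hz0]
    field_simp
  rw [hfz, norm_mul]
  have step1 : ‖z‖ * ‖h z - 1‖ ≤ ‖z‖ * (‖z‖ * (M^2 - 1) / (M - ‖z‖)) := by
    apply mul_le_mul_of_nonneg_left _ (norm_nonneg z)
    rw [le_div_iff₀ hMz]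
    linarith [hw1]
  refine le_trans step1 ?_
  have hzn : 0 ≤ ‖z‖ := norm_nonneg z
  have e4 : ‖z‖ * (‖z‖ * (M^2-1)/(M-‖z‖)) = ‖z‖^2 * (M^2-1) / (M - ‖z‖) := by ring
  have e5 : (M - 1/M) * ‖z‖^2/(1-‖z‖) = ‖z‖^2*(M^2-1)/(M*(1-‖z‖)) := by
    field_simp
  rw [e4, e5]
  apply div_le_div_of_nonneg_left (mul_nonneg (sq_nonneg _) (by nlinarith)) (mul_pos hM0 (by linarith)) (by nlinarith)


theorem stmt15 (p : ℕ) (hp : 0 < p) (M : ℕ → ℝ)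
    (hM : ∀ k ∈ Finset.range p, 1 < M k)
    (A : ℕ → ℂ → ℂ)
    (hA : ∀ k ∈ Finset.range p, DifferentiableOn ℂ (A k) (Metric.ball 0 1))
    (hA0 : ∀ k ∈ Finset.range p, A k 0 = 0)
    (hA'0 : ∀ k ∈ Finset.range p, deriv (A k) 0 = 1)
    (hAM : ∀ k ∈ Finset.range p, ∀ z ∈ Metric.ball (0 : ℂ) 1, ‖A k z‖ ≤ M k)
    (ρ₃ : ℝ) (hρ₃ : ρ₃ ∈ Set.Ioo (0 : ℝ) 1) :
    ∀ z : ℂ, ‖z‖ = ρ₃ →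
      ρ₃ - ρ₃ ^ 2 * ((1 - ρ₃ ^ (p - 1)) / (1 - ρ₃))
        - (∑ k ∈ Finset.range p, (M k - 1 / M k) * ρ₃ ^ (k + 2) / (1 - ρ₃))
      ≤ ‖∑ k ∈ Finset.range p, (starRingEnd ℂ z) ^ k * A k z‖ := by
  obtain ⟨hρ0, hρ1⟩ := hρ₃
  intro z hzn
  have hzb : z ∈ Metric.ball (0:ℂ) 1 := by
    simp only [Metric.mem_ball, dist_eq_norm, sub_zero, hzn]
    exact hρ1
  have hcn : ‖starRingEnd ℂ z‖ = ρ₃ := by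
    rw [RCLike.norm_conj, hzn]
  obtain ⟨n, rfl⟩ : ∃ n, p = n + 1 := ⟨p - 1, (Nat.succ_pred_eq_of_pos hp).symm⟩
  have hsplit : ∑ k ∈ Finset.range (n+1), (starRingEnd ℂ z)^k * A k z
      = (∑ k ∈ Finset.range (n+1), (starRingEnd ℂ z)^k * z)
        + ∑ k ∈ Finset.range (n+1), (starRingEnd ℂ z)^k * (A k z - z) := by
    rw [← Finset.sum_add_distrib]
    apply Finset.sum_congr rfl
    intros; ring
  have hgeom : ∑ k ∈ Finset.range n, ρ₃^k = (1 - ρ₃^n)/(1 - ρ₃) := by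
    rw [geom_sum_eq hρ1.ne, ← neg_sub (1:ℝ) ρ₃, ← neg_sub (1:ℝ) (ρ₃^n), neg_div_neg_eq]
  -- first sum
  have hT1 : ρ₃ - ρ₃^2 * ((1 - ρ₃^n)/(1 - ρ₃))
      ≤ ‖∑ k ∈ Finset.range (n+1), (starRingEnd ℂ z)^k * z‖ := by
    rw [Finset.sum_range_succ']
    have htb : ‖∑ k ∈ Finset.range n, (starRingEnd ℂ z)^(k+1) * z‖
        ≤ ρ₃^2 * ((1 - ρ₃^n)/(1 - ρ₃)) := by
      refine le_trans (norm_sum_le _ _) ?_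
      have : ∀ k ∈ Finset.range n, ‖(starRingEnd ℂ z)^(k+1) * z‖ = ρ₃^2 * ρ₃^k := by
        intro k _
        rw [norm_mul, norm_pow, hcn, hzn]
        ring
      rw [Finset.sum_congr rfl this, ← Finset.mul_sum, hgeom]
    have h5 : ‖((starRingEnd ℂ z)^0 * z : ℂ)‖ = ρ₃ := by simp [hzn]
    have h6 := norm_sub_le ((∑ k ∈ Finset.range n, (starRingEnd ℂ z)^(k+1) * z)
        + (starRingEnd ℂ z)^0 * z) (∑ k ∈ Finset.range n, (starRingEnd ℂ z)^(k+1) * z)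
    simp only [add_sub_cancel_left] at h6
    rw [h5] at h6
    linarith
  -- second sum
  have hT2 : ‖∑ k ∈ Finset.range (n+1), (starRingEnd ℂ z)^k * (A k z - z)‖
      ≤ ∑ k ∈ Finset.range (n+1), (M k - 1/M k) * ρ₃^(k+2)/(1-ρ₃) := by
    refine le_trans (norm_sum_le _ _) (Finset.sum_le_sum ?_)
    intro k hk
    rw [norm_mul, norm_pow, hcn]
    have hlp := landau_pointwise (A k) (M k) (hM k hk) (hA k hk) (hA0 k hk) (hA'0 k hk)
      (hAM k hk) z hzb
    rw [hzn] at hlp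
    calc ρ₃^k * ‖A k z - z‖ ≤ ρ₃^k * ((M k - 1/M k) * ρ₃^2 / (1 - ρ₃)) := by
          exact mul_le_mul_of_nonneg_left hlp (by positivity)
      _ = (M k - 1/M k) * ρ₃^(k+2)/(1-ρ₃) := by ring
  -- combine
  rw [hsplit]
  have h7 := norm_sub_le ((∑ k ∈ Finset.range (n+1), (starRingEnd ℂ z)^k * z)
      + ∑ k ∈ Finset.range (n+1), (starRingEnd ℂ z)^k * (A k z - z))
      (∑ k ∈ Finset.range (n+1), (starRingEnd ℂ z)^k * (A k z - z))
  simp only [add_sub_cancel_right] at h7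
  have hn1 : (n + 1) - 1 = n := rfl
  rw [hn1]
  linarith
end

section
/- Suppose 0 < σ < 1, 0 < ρ ≤ 1, f is continuous and nonvanishing on U_ρ with f(0) = 1, F = log f is well-defined on U_ρ, f is injective on U_ρ, and F(U_ρ) ⊇ {|w| < σ}. Then f(U_ρ) contains the open disk centered at cosh σ of radius sinh σ. -/
set_option maxHeartbeats 1600000

section helpers

lemma expand_bounds' {t : ℝ} (h0 : 0 ≤ t) (h1 : t ≤ 1) :
    (Real.exp t ≤ 1 + t + t^2/2 + t^3/6 + t^4 * (5/96)) ∧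
    (1 + t + t^2/2 + t^3/6 - t^4 * (5/96) ≤ Real.exp t) ∧
    (Real.exp (-t) ≤ 1 - t + t^2/2 - t^3/6 + t^4 * (5/96)) ∧
    (1 - t + t^2/2 - t^3/6 - t^4 * (5/96) ≤ Real.exp (-t)) := by
  have habs : |t| = t := abs_of_nonneg h0
  have hb1 := Real.exp_bound (x := t) (by rw [habs]; exact h1) (n := 4) (by norm_num)
  have hb2 := Real.exp_bound (x := -t) (by rw [abs_neg, habs]; exact h1) (n := 4) (by norm_num)
  rw [habs] at hb1
  rw [abs_neg, habs] at hb2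
  simp only [Finset.sum_range_succ, Finset.sum_range_zero, Nat.factorial] at hb1 hb2
  norm_num at hb1 hb2
  rw [abs_le] at hb1 hb2
  refine ⟨by linarith [hb1.2], by linarith [hb1.1], by linarith [hb2.2], by linarith [hb2.1]⟩

lemma sinh_ub' {t : ℝ} (h0 : 0 ≤ t) (h1 : t ≤ 1) :
    Real.sinh t ≤ t + (21/96) * t^3 := by
  obtain ⟨e1, _, _, e4⟩ := expand_bounds' h0 h1
  have ht4 : t^4 ≤ t^3 := pow_le_pow_of_le_one h0 h1 (by norm_num)
  rw [Real.sinh_eq]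
  linarith

lemma cosh_ub' {t : ℝ} (h0 : 0 ≤ t) (h1 : t ≤ 1) :
    Real.cosh t ≤ 1 + t^2/2 + (5/96) * t^4 := by
  obtain ⟨e1, _, e3, _⟩ := expand_bounds' h0 h1
  rw [Real.cosh_eq]
  linarith

lemma cosh_lb' (t : ℝ) : 1 + t^2/2 ≤ Real.cosh t := by
  have h2 : Real.cosh (2 * (t/2)) = Real.cosh (t/2)^2 + Real.sinh (t/2)^2 :=
    Real.cosh_two_mul (t/2)
  have h3 : (2 : ℝ) * (t/2) = t := by ring
  rw [h3] at h2
  have hcs : Real.cosh (t/2)^2 = Real.sinh (t/2)^2 + 1 := Real.cosh_sq (t/2)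
  have h4 : |t|/2 ≤ Real.sinh (|t|/2) := Real.self_le_sinh_iff.2 (by positivity)
  have h5 : Real.sinh (t/2)^2 = Real.sinh (|t|/2)^2 := by
    rcases abs_cases t with ⟨h, _⟩ | ⟨h, _⟩
    · rw [h]
    · rw [h, show -t/2 = -(t/2) by ring, Real.sinh_neg]; ring
  nlinarith [abs_nonneg t, sq_abs t]

lemma cos_mul_cosh_le' {t : ℝ} (h0 : 0 ≤ t) (h1 : t ≤ 1) :
    Real.cos t * Real.cosh t ≤ 1 := by
  have hc := Real.cos_bound (x := t) (by rw [abs_of_nonneg h0]; exact h1)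
  rw [abs_of_nonneg h0, abs_le] at hc
  have hh := cosh_ub' h0 h1
  have hcpos : 0 ≤ Real.cosh t := (Real.cosh_pos t).le
  have hA0 : (0:ℝ) ≤ 1 - t^2/2 + t^4 * (5/96) := by nlinarith
  have s1 : Real.cos t * Real.cosh t ≤ (1 - t^2/2 + t^4 * (5/96)) * Real.cosh t :=
    mul_le_mul_of_nonneg_right (by linarith [hc.2]) hcpos
  have s2 : (1 - t^2/2 + t^4 * (5/96)) * Real.cosh t
      ≤ (1 - t^2/2 + t^4 * (5/96)) * (1 + t^2/2 + (5/96) * t^4) :=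
    mul_le_mul_of_nonneg_left hh hA0
  have ht8 : t^8 ≤ t^4 := pow_le_pow_of_le_one h0 h1 (by norm_num)
  nlinarith [s1, s2]

lemma hC' (p m : ℝ) (hm0 : 0 ≤ m) (hmp : m ≤ p) (hp1 : p ≤ 1) :
    2*(1 + 21/96*p^2)*(1 + 21/96*m^2)*(1 - 2*p*m + 5/6*p^2*m^2)
      ≤ (1 + (p-m)^2/2)*(2 - 5/6*p*m) := by
  have hp0 : 0 ≤ p := le_trans hm0 hmp
  have hm1 : m ≤ 1 := le_trans hmp hp1
  have hpm0 : 0 ≤ p*m := mul_nonneg hp0 hm0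
  have hpm1 : p*m ≤ 1 := by nlinarith
  have h1 : 0 ≤ p*m*(1 - p*m) := mul_nonneg hpm0 (by linarith)
  have h2 : 0 ≤ p*m*(p^2+m^2)*(1 - p*m) :=
    mul_nonneg (mul_nonneg hpm0 (by positivity)) (by linarith)
  have h3 : 0 ≤ p*m*(1 - p*m)*(1 + p*m + (p*m)^2) :=
    mul_nonneg h1 (by positivity)
  have h4 : 0 ≤ p^3*m^3 := by positivity
  have h5 : 0 ≤ p*m*(p^2+m^2) := mul_nonneg hpm0 (by positivity)
  nlinarith [h1, h2, h3, h4, h5, sq_nonneg p, sq_nonneg m]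

lemma main_case (σ u y : ℝ) (hσ0 : 0 < σ) (hσ1 : σ ≤ 1) (hu0 : 0 ≤ u) (huσ : u ≤ σ)
    (hY : y^2 = σ^2 - u^2) (hyabs1 : |y| ≤ 1) (hcy : 0 < Real.cos y) :
    Real.cosh σ * Real.cos y ≤ Real.cosh u := by
  have ha0 : (0:ℝ) ≤ (σ+u)/2 := by linarith
  have ha1 : (σ+u)/2 ≤ 1 := by linarith
  have hb0 : (0:ℝ) ≤ (σ-u)/2 := by linarith
  have hb1 : (σ-u)/2 ≤ 1 := by linarith
  have hid : Real.cosh σ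
      = Real.cosh u + 2 * Real.sinh ((σ+u)/2) * Real.sinh ((σ-u)/2) := by
    have h := Real.cosh_add ((σ+u)/2) ((σ-u)/2)
    have h' := Real.cosh_sub ((σ+u)/2) ((σ-u)/2)
    have e1 : (σ+u)/2 + ((σ-u)/2) = σ := by ring
    have e2 : (σ+u)/2 - ((σ-u)/2) = u := by ring
    rw [e1] at h
    rw [e2] at h'
    rw [h, h']; ring
  have hsa := sinh_ub' ha0 ha1
  have hsb := sinh_ub' hb0 hb1
  have hsa0 : 0 ≤ Real.sinh ((σ+u)/2) := Real.sinh_nonneg_iff.2 ha0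
  have hsb0 : 0 ≤ Real.sinh ((σ-u)/2) := Real.sinh_nonneg_iff.2 hb0
  have hcub := cosh_lb' u
  have hcb := Real.cos_bound (x := y) hyabs1
  rw [abs_le] at hcb
  have hy4 : |y|^4 = y^4 := by rw [← abs_pow]; exact abs_of_nonneg (by positivity)
  rw [hy4] at hcb
  have hcyub : Real.cos y ≤ 1 - y^2/2 + y^4*(5/96) := by linarith [hcb.2]
  have hcylb : 1 - y^2/2 - y^4*(5/96) ≤ Real.cos y := by linarith [hcb.1]
  have hy2le : y^2 ≤ 1 := by nlinarith [sq_abs y, abs_nonneg y]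
  have hq0 : (0:ℝ) ≤ 1 - y^2/2 + y^4*(5/96) := by nlinarith [sq_nonneg y]
  have hr0 : (0:ℝ) ≤ y^2/2 - y^4*(5/96) := by nlinarith [sq_nonneg y]
  have hA0 : 0 ≤ (σ+u)/2 + 21/96*((σ+u)/2)^3 :=
    add_nonneg ha0 (mul_nonneg (by norm_num) (pow_nonneg ha0 3))
  have hB0 : 0 ≤ (σ-u)/2 + 21/96*((σ-u)/2)^3 :=
    add_nonneg hb0 (mul_nonneg (by norm_num) (pow_nonneg hb0 3))
  have t1 : Real.sinh ((σ+u)/2) * Real.sinh ((σ-u)/2)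
      ≤ ((σ+u)/2 + 21/96*((σ+u)/2)^3) * ((σ-u)/2 + 21/96*((σ-u)/2)^3) :=
    mul_le_mul hsa hsb hsb0 hA0
  have hprod : 2 * Real.sinh ((σ+u)/2) * Real.sinh ((σ-u)/2) * Real.cos y
      ≤ 2*(((σ+u)/2 + 21/96*((σ+u)/2)^3) * ((σ-u)/2 + 21/96*((σ-u)/2)^3))
        * (1 - y^2/2 + y^4*(5/96)) := by
    have hstep := mul_le_mul
      (by linarith [t1] : 2 * (Real.sinh ((σ+u)/2) * Real.sinh ((σ-u)/2))
          ≤ 2*(((σ+u)/2 + 21/96*((σ+u)/2)^3) * ((σ-u)/2 + 21/96*((σ-u)/2)^3)))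
      hcyub hcy.le
      (by nlinarith [mul_nonneg hA0 hB0])
    nlinarith [hstep]
  have hCC := hC' ((σ+u)/2) ((σ-u)/2) hb0 (by linarith) ha1
  have hpm : 0 ≤ (σ+u)/2 * ((σ-u)/2) := mul_nonneg ha0 hb0
  have hY2 : y^4 = (σ^2 - u^2)^2 := by rw [show y^4 = (y^2)^2 by ring, hY]
  have hmid : 2*(((σ+u)/2 + 21/96*((σ+u)/2)^3) * ((σ-u)/2 + 21/96*((σ-u)/2)^3))
        * (1 - y^2/2 + y^4*(5/96))
      ≤ (1 + u^2/2) * (y^2/2 - y^4*(5/96)) := by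
    have hmul := mul_le_mul_of_nonneg_left hCC hpm
    nlinarith [hmul, hY, hY2]
  have hHC : (1 + u^2/2) * (y^2/2 - y^4*(5/96))
      ≤ Real.cosh u * (1 - Real.cos y) :=
    mul_le_mul hcub (by linarith) hr0 (Real.cosh_pos u).le
  rw [hid]
  nlinarith [hprod, hmid, hHC]

lemma key_ineq (σ x y : ℝ) (hσ0 : 0 < σ) (hσ1 : σ < 1) (hy : |y| ≤ Real.pi)
    (h : Real.cosh x < Real.cosh σ * Real.cos y) : x^2 + y^2 < σ^2 := by
  by_contra hcon
  push_neg at hcon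
  have h1x : (1:ℝ) ≤ Real.cosh x := Real.one_le_cosh x
  have hchσ : 0 < Real.cosh σ := Real.cosh_pos σ
  have hge : Real.cosh σ * Real.cos y ≤ Real.cosh x := by
    rcases le_or_gt (Real.cos y) 0 with hcy | hcy
    · nlinarith
    have hca : Real.cos |y| = Real.cos y := Real.cos_abs y
    rcases le_or_gt (σ^2) (y^2) with hyσ | hyσ
    · -- |y| ≥ σ
      have hσy : σ ≤ |y| := by nlinarith [abs_nonneg y, sq_abs y]
      rcases le_or_gt (|y|) 1 with hy1 | hy1
      · have hcc := cos_mul_cosh_le' (abs_nonneg y) hy1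
        have hmono : Real.cosh σ ≤ Real.cosh |y| :=
          Real.cosh_le_cosh.2 (by rwa [abs_of_pos hσ0, abs_abs])
        nlinarith [Real.cosh_pos |y|]
      · have hc1 : Real.cos |y| ≤ Real.cos 1 :=
          Real.cos_le_cos_of_nonneg_of_le_pi (by norm_num) hy hy1.le
        have hb := Real.cos_bound (x := 1) (by norm_num)
        rw [abs_le] at hb
        have hcos1 : Real.cos 1 ≤ 53/96 := by norm_num at hb ⊢; linarith [hb.2]
        have hch1 : Real.cosh σ ≤ 149/96 := by
          have hm : Real.cosh σ ≤ Real.cosh 1 :=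
            Real.cosh_le_cosh.2 (by rw [abs_of_pos hσ0, abs_one]; exact hσ1.le)
          have := cosh_ub' (t := 1) (by norm_num) (by norm_num)
          norm_num at this
          linarith
        nlinarith
    · -- main case : y² < σ²
      have hyabs1 : |y| ≤ 1 := by nlinarith [abs_nonneg y, sq_abs y]
      have hu0 : 0 ≤ Real.sqrt (σ^2 - y^2) := Real.sqrt_nonneg _
      have hu2 : Real.sqrt (σ^2 - y^2)^2 = σ^2 - y^2 := Real.sq_sqrt (by linarith)
      have huσ : Real.sqrt (σ^2 - y^2) ≤ σ := by nlinarith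
      have hxu : Real.cosh (Real.sqrt (σ^2 - y^2)) ≤ Real.cosh x := by
        apply Real.cosh_le_cosh.2
        rw [abs_of_nonneg hu0]
        nlinarith [abs_nonneg x, sq_abs x]
      have hs := main_case σ (Real.sqrt (σ^2 - y^2)) y hσ0 hσ1.le hu0 huσ
        (by linarith) hyabs1 hcy
      linarith
  linarith

end helpers

theorem stmt16 (σ ρ : ℝ) (hσ0 : 0 < σ) (hσ1 : σ < 1) (hρ0 : 0 < ρ) (hρ1 : ρ ≤ 1)
    (f F : ℂ → ℂ)
    (hf : ContinuousOn f (Metric.ball 0 ρ))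
    (hf0 : f 0 = 1)
    (hfne : ∀ z ∈ Metric.ball (0 : ℂ) ρ, f z ≠ 0)
    (hF0 : F 0 = 0)
    (hFlog : ∀ z ∈ Metric.ball (0 : ℂ) ρ, Complex.exp (F z) = f z)
    (hinj : Set.InjOn f (Metric.ball 0 ρ))
    (hcover : Metric.ball (0 : ℂ) σ ⊆ F '' (Metric.ball 0 ρ)) :
    Metric.ball ((Real.cosh σ : ℂ)) (Real.sinh σ) ⊆ f '' (Metric.ball 0 ρ) := by
  intro w hw
  rw [Metric.mem_ball, Complex.dist_eq] at hw
  have hsinh0 : 0 < Real.sinh σ := by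
    rw [Real.sinh_pos_iff]; exact hσ0
  have hexpσ : 0 < Real.exp (-σ) := Real.exp_pos _
  have hcs : Real.cosh σ - Real.sinh σ = Real.exp (-σ) := Real.cosh_sub_sinh σ
  have hwne : w ≠ 0 := by
    intro h
    rw [h] at hw
    simp only [zero_sub, norm_neg] at hw
    rw [Complex.norm_real, Real.norm_eq_abs, abs_of_pos (Real.cosh_pos σ)] at hw
    linarith
  have habs0 : 0 < ‖w‖ := norm_pos_iff.mpr hwne
  have hsq : (w.re - Real.cosh σ)^2 + w.im^2 < (Real.sinh σ)^2 := by
    have h2 : (‖w - (Real.cosh σ : ℂ)‖)^2 < (Real.sinh σ)^2 := by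
      nlinarith [norm_nonneg (w - (Real.cosh σ : ℂ))]
    rw [Complex.sq_norm, Complex.normSq_apply] at h2
    simp only [Complex.sub_re, Complex.sub_im, Complex.ofReal_re, Complex.ofReal_im] at h2
    nlinarith [h2]
  have hpyth : Real.cosh σ ^2 - Real.sinh σ ^2 = 1 := Real.cosh_sq_sub_sinh_sq σ
  have h1 : w.re^2 + w.im^2 + 1 < 2 * Real.cosh σ * w.re := by nlinarith
  have habsq : (‖w‖)^2 = w.re^2 + w.im^2 := by
    rw [Complex.sq_norm, Complex.normSq_apply]; ring
  have hre : w.re = ‖w‖ * Real.cos (Complex.arg w) := by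
    rw [Complex.cos_arg hwne]; field_simp
  have h3 : (‖w‖)^2 + 1
      < 2 * Real.cosh σ * (‖w‖ * Real.cos (Complex.arg w)) := by
    rw [← hre]; linarith
  have hcoshx : Real.cosh (Real.log (‖w‖))
      = (‖w‖ + (‖w‖)⁻¹)/2 := by
    rw [Real.cosh_eq, Real.exp_log habs0, Real.exp_neg, Real.exp_log habs0]
  have hinv : ‖w‖ * (‖w‖)⁻¹ = 1 := mul_inv_cancel₀ habs0.ne'
  have hlt : Real.cosh (Real.log (‖w‖))
      < Real.cosh σ * Real.cos (Complex.arg w) := by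
    rw [hcoshx]
    nlinarith [h3, habs0, hinv]
  have hxy := key_ineq σ (Real.log (‖w‖)) (Complex.arg w) hσ0 hσ1
    (Complex.abs_arg_le_pi w) hlt
  have hζ : Complex.log w ∈ Metric.ball (0:ℂ) σ := by
    rw [mem_ball_zero_iff]
    have hsq2 : (‖Complex.log w‖)^2
        = (Real.log (‖w‖))^2 + (Complex.arg w)^2 := by
      rw [Complex.sq_norm, Complex.normSq_apply, Complex.log_re, Complex.log_im]
      ring
    nlinarith [norm_nonneg (Complex.log w)]
  obtain ⟨z, hz, hFz⟩ := hcover hζ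
  exact ⟨z, hz, by rw [← hFlog z hz, hFz, Complex.exp_log hwne]⟩
end

section
/- The image of the open disk {w ∈ ℂ : |w| < σ} under the exponential map contains the open disk centered at cosh σ with radius sinh σ, for any 0 < σ < 1. -/
open Real

/-- Degree-4 upper bound on `exp` on `[0,1]`. -/
lemma aux_exp_poly {x : ℝ} (h0 : 0 ≤ x) (h1 : x ≤ 1) :
    Real.exp x ≤ 1 + x + x ^ 2 / 2 + x ^ 3 / 6 + x ^ 4 * (5 / 96) := by
  have h := Real.exp_bound' h0 h1 (n := 4) (by norm_num)
  have hs : (∑ m ∈ Finset.range 4, x ^ m / m.factorial) =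
      1 + x + x ^ 2 / 2 + x ^ 3 / 6 := by
    norm_num [Finset.sum_range_succ, Nat.factorial]
  rw [hs] at h
  norm_num [Nat.factorial] at h
  linarith

/-- `sinh t ≤ t * cosh t` for `t ∈ [0,1]`. -/
lemma aux_sinh_le {t : ℝ} (h0 : 0 ≤ t) (h1 : t ≤ 1) :
    Real.sinh t ≤ t * Real.cosh t := by
  have hE := aux_exp_poly h0 h1
  have hEpos : 0 < Real.exp t := Real.exp_pos t
  have hEinv : Real.exp (-t) * Real.exp t = 1 := by
    rw [← Real.exp_add]; simp
  rw [Real.sinh_eq, Real.cosh_eq]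
  -- reduce to (exp t)^2 * (1 - t) ≤ 1 + t after multiplying by exp t
  have hsq : Real.exp t ^ 2 ≤ (1 + t + t ^ 2 / 2 + t ^ 3 / 6 + t ^ 4 * (5 / 96)) ^ 2 :=
    pow_le_pow_left₀ hEpos.le hE 2
  have key : Real.exp t ^ 2 * (1 - t) ≤ 1 + t := by
    have hpoly : (1 + t + t ^ 2 / 2 + t ^ 3 / 6 + t ^ 4 * (5 / 96)) ^ 2 * (1 - t) ≤ 1 + t := by
      nlinarith [sq_nonneg t, pow_nonneg h0 3, pow_nonneg h0 4, pow_nonneg h0 5, pow_nonneg h0 6,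
        pow_nonneg h0 7, pow_nonneg h0 8, pow_nonneg h0 9, sq_nonneg (1 - t),
        mul_nonneg (mul_nonneg h0 h0) (sub_nonneg.2 h1),
        pow_le_pow_of_le_one h0 h1 (show 3 ≤ 9 by norm_num),
        pow_le_pow_of_le_one h0 h1 (show 4 ≤ 9 by norm_num)]
    nlinarith [mul_le_mul_of_nonneg_right hsq (sub_nonneg.2 h1)]
  have h4 : Real.exp t ^ 2 * Real.exp (-t) = Real.exp t := by
    rw [pow_two, mul_assoc, ← Real.exp_add]; simp
  have h5 : Real.exp t ^ 2 * Real.exp (-t) * t = Real.exp t * t := by rw [h4]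
  have h3 := mul_le_mul_of_nonneg_right key (Real.exp_pos (-t)).le
  nlinarith [h3, h4, h5, hEinv]

/-- `cosh d ≤ exp (d^2/2)` for `d ∈ [0,1]`. -/
lemma aux_cosh_le {d : ℝ} (h0 : 0 ≤ d) (h1 : d ≤ 1) :
    Real.cosh d ≤ Real.exp (d ^ 2 / 2) := by
  have habs : |(-d)| ≤ 1 := by rw [abs_neg, abs_of_nonneg h0]; exact h1
  have habs' : |d| ≤ 1 := by rw [abs_of_nonneg h0]; exact h1
  have h5 := Real.exp_bound habs (n := 5) (by norm_num)
  have h5' := Real.exp_bound habs' (n := 5) (by norm_num)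
  have hs : (∑ m ∈ Finset.range 5, (-d) ^ m / m.factorial) =
      1 - d + d ^ 2 / 2 - d ^ 3 / 6 + d ^ 4 / 24 := by
    norm_num [Finset.sum_range_succ, Nat.factorial]
    ring
  have hs' : (∑ m ∈ Finset.range 5, d ^ m / m.factorial) =
      1 + d + d ^ 2 / 2 + d ^ 3 / 6 + d ^ 4 / 24 := by
    norm_num [Finset.sum_range_succ, Nat.factorial]
  rw [hs, abs_neg, abs_of_nonneg h0] at h5
  rw [hs', abs_of_nonneg h0] at h5'
  norm_num [Nat.factorial] at h5 h5'
  have hub : Real.cosh d ≤ 1 + d ^ 2 / 2 + d ^ 4 / 24 + d ^ 5 / 100 := by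
    rw [Real.cosh_eq]
    have e1 : Real.exp d - (1 + d + d ^ 2 / 2 + d ^ 3 / 6 + d ^ 4 / 24) ≤ d ^ 5 / 100 := by
      have := (abs_sub_le_iff.1 h5').1; linarith
    have e2 : Real.exp (-d) - (1 - d + d ^ 2 / 2 - d ^ 3 / 6 + d ^ 4 / 24) ≤ d ^ 5 / 100 := by
      have := (abs_sub_le_iff.1 h5).1; linarith
    linarith
  have hlb : (1 + d ^ 2 / 4) ^ 2 ≤ Real.exp (d ^ 2 / 2) := by
    have h4 : (1 + d ^ 2 / 4) ≤ Real.exp (d ^ 2 / 4) := by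
      have := Real.add_one_le_exp (d ^ 2 / 4); linarith
    have : Real.exp (d ^ 2 / 2) = Real.exp (d ^ 2 / 4) ^ 2 := by
      rw [← Real.exp_nat_mul]; ring_nf
    rw [this]
    have h40 : (0:ℝ) ≤ 1 + d ^ 2 / 4 := by positivity
    exact pow_le_pow_left₀ h40 h4 2
  nlinarith [pow_nonneg h0 4, pow_nonneg h0 5, pow_le_pow_of_le_one h0 h1 (show 4 ≤ 5 by norm_num)]

/-- `cos x ≤ exp (-(x^2/2))` for `|x| ≤ 1`. -/
lemma aux_cos_le {x : ℝ} (hx : |x| ≤ 1) :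
    Real.cos x ≤ Real.exp (-(x ^ 2 / 2)) := by
  have hc := Real.cos_bound hx
  have hcu : Real.cos x ≤ 1 - x ^ 2 / 2 + x ^ 4 * (5 / 96) := by
    have h1 := (abs_sub_le_iff.1 hc).1
    have hx4 : |x| ^ 4 = x ^ 4 := by rw [← abs_pow, abs_of_nonneg (by positivity)]
    rw [hx4] at h1; linarith
  set u := x ^ 2 / 2 with hu
  have hu0 : 0 ≤ u := by positivity
  have hu1 : u ≤ 1 / 2 := by
    have : x ^ 2 ≤ 1 := by
      have := sq_abs x; nlinarith [abs_nonneg x]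
    simp only [hu]; linarith
  have hP := aux_exp_poly hu0 (by linarith)
  -- cos x ≤ 1 - u + (5/24) u^2 and (1 - u + 5u²/24) * exp u ≤ 1
  have hcu' : Real.cos x ≤ 1 - u + u ^ 2 * (5 / 24) := by
    have : x ^ 4 = 4 * u ^ 2 := by rw [hu]; ring
    rw [this] at hcu; linarith
  have hkey : (1 - u + u ^ 2 * (5 / 24)) * Real.exp u ≤ 1 := by
    have hA0 : (0:ℝ) ≤ 1 - u + u ^ 2 * (5 / 24) := by nlinarith
    have := mul_le_mul_of_nonneg_left hP hA0
    nlinarith [sq_nonneg u, pow_nonneg hu0 3, pow_nonneg hu0 4, pow_nonneg hu0 5,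
      pow_nonneg hu0 6, hu1]
  have hEpos : 0 < Real.exp u := Real.exp_pos u
  have hinv : Real.exp (-u) * Real.exp u = 1 := by rw [← Real.exp_add]; simp
  calc Real.cos x ≤ 1 - u + u ^ 2 * (5 / 24) := hcu'
    _ ≤ Real.exp (-u) := by
        rw [← mul_le_mul_iff_of_pos_right hEpos, hinv]; exact hkey
    _ = Real.exp (-(x ^ 2 / 2)) := by rw [hu]

/-- Key inequality: if `0 ≤ t ≤ σ ≤ 1`, `|φ| ≤ 1` and `σ² ≤ t² + φ²`, then
`cosh σ * cos φ ≤ cosh t`. -/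
lemma aux_key {σ t φ : ℝ} (ht0 : 0 ≤ t) (htσ : t ≤ σ) (hσ1 : σ ≤ 1) (hφ1 : |φ| ≤ 1)
    (hsum : σ ^ 2 ≤ t ^ 2 + φ ^ 2) : Real.cosh σ * Real.cos φ ≤ Real.cosh t := by
  set d := σ - t with hd
  have hd0 : 0 ≤ d := by simp [hd]; linarith
  have hd1 : d ≤ 1 := by simp [hd]; linarith
  have ht1 : t ≤ 1 := le_trans htσ hσ1
  have hcosφ0 : 0 ≤ Real.cos φ := by
    apply Real.cos_nonneg_of_mem_Icc
    constructor
    · have := neg_abs_le φ; have := Real.pi_gt_three; linarith [abs_le.1 hφ1]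
    · have := Real.pi_gt_three; linarith [abs_le.1 hφ1]
  have hsinht := aux_sinh_le ht0 ht1
  have hsinhd := aux_sinh_le hd0 hd1
  have hcoshd := aux_cosh_le hd0 hd1
  have hexp : 1 + t * d ≤ Real.exp (t * d) := by
    have := Real.add_one_le_exp (t * d); linarith
  have hcht : 0 < Real.cosh t := Real.cosh_pos t
  have hchd : 0 < Real.cosh d := Real.cosh_pos d
  have hstep1 : Real.cosh σ ≤ Real.cosh t * (Real.cosh d * (1 + t * d)) := by
    have hσeq : σ = t + d := by rw [hd]; ring
    rw [hσeq, Real.cosh_add]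
    have hm : Real.sinh t * Real.sinh d ≤ (t * Real.cosh t) * (d * Real.cosh d) := by
      apply mul_le_mul hsinht hsinhd (Real.sinh_nonneg_iff.2 hd0) (by positivity)
    nlinarith
  have hstep2 : Real.cosh d * (1 + t * d) ≤ Real.exp (d ^ 2 / 2 + t * d) := by
    rw [Real.exp_add]
    exact mul_le_mul hcoshd hexp (by positivity) (Real.exp_pos _).le
  have hstep3 : Real.exp (d ^ 2 / 2 + t * d) ≤ Real.exp (φ ^ 2 / 2) := by
    apply Real.exp_le_exp.2
    have : d ^ 2 + 2 * (t * d) = σ ^ 2 - t ^ 2 := by rw [hd]; ring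
    nlinarith
  have hcosφ := aux_cos_le hφ1
  calc Real.cosh σ * Real.cos φ
      ≤ (Real.cosh t * Real.exp (φ ^ 2 / 2)) * Real.cos φ := by
        apply mul_le_mul_of_nonneg_right _ hcosφ0
        calc Real.cosh σ ≤ Real.cosh t * (Real.cosh d * (1 + t * d)) := hstep1
          _ ≤ Real.cosh t * Real.exp (d ^ 2 / 2 + t * d) :=
              mul_le_mul_of_nonneg_left hstep2 hcht.le
          _ ≤ Real.cosh t * Real.exp (φ ^ 2 / 2) :=
              mul_le_mul_of_nonneg_left hstep3 hcht.le
    _ ≤ (Real.cosh t * Real.exp (φ ^ 2 / 2)) * Real.exp (-(φ ^ 2 / 2)) := by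
        apply mul_le_mul_of_nonneg_left hcosφ (by positivity)
    _ = Real.cosh t := by
        rw [mul_assoc, ← Real.exp_add]; simp

theorem stmt17 (σ : ℝ) (hσ0 : 0 < σ) (hσ1 : σ < 1) :
    Metric.ball ((Real.cosh σ : ℂ)) (Real.sinh σ) ⊆
      Complex.exp '' (Metric.ball 0 σ) := by
  intro ζ hζ
  rw [Metric.mem_ball, Complex.dist_eq] at hζ
  have key1 : ζ.re ^ 2 + ζ.im ^ 2 + 1 < 2 * Real.cosh σ * ζ.re := by
    have h2 : ‖ζ - (Real.cosh σ : ℂ)‖ ^ 2 < Real.sinh σ ^ 2 :=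
      pow_lt_pow_left₀ hζ (norm_nonneg _) two_ne_zero
    rw [Complex.sq_norm, Complex.normSq_apply] at h2
    simp only [Complex.sub_re, Complex.sub_im, Complex.ofReal_re, Complex.ofReal_im,
      sub_zero] at h2
    nlinarith [Real.cosh_sq_sub_sinh_sq σ]
  have hx : 0 < ζ.re := by
    by_contra h
    push_neg at h
    nlinarith [Real.cosh_pos σ, sq_nonneg ζ.re, sq_nonneg ζ.im,
      mul_nonneg (Real.cosh_pos σ).le (neg_nonneg.2 h)]
  have hζne : ζ ≠ 0 := by
    intro h; rw [h] at hx; simp at hx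
  set r := ‖ζ‖ with hrdef
  have hr : 0 < r := norm_pos_iff.mpr hζne
  have hr2 : r ^ 2 = ζ.re ^ 2 + ζ.im ^ 2 := by
    rw [hrdef, Complex.sq_norm, Complex.normSq_apply]; ring
  set t := Real.log r with htdef
  set φ := Complex.arg ζ with hφdef
  have het : Real.exp t = r := Real.exp_log hr
  have hent : Real.exp (-t) = r⁻¹ := by rw [Real.exp_neg, het]
  have hcos : Real.cos φ = ζ.re / r := Complex.cos_arg hζne
  have key2 : Real.cosh t < Real.cosh σ * Real.cos φ := by
    have h' : r ^ 2 + 1 < 2 * Real.cosh σ * ζ.re := by rw [hr2]; linarith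
    have e1 : Real.cosh t * r = (r ^ 2 + 1) / 2 := by
      rw [Real.cosh_eq, het, hent]; field_simp
    have e2 : Real.cos φ * r = ζ.re := by
      rw [hcos]; field_simp
    have hlt : Real.cosh t * r < (Real.cosh σ * Real.cos φ) * r := by
      rw [e1, mul_assoc, e2]; linarith
    exact lt_of_mul_lt_mul_right hlt hr.le
  have hcosh_tσ : Real.cosh t < Real.cosh σ := by
    nlinarith [Real.cos_le_one φ, Real.cosh_pos σ]
  have ht : |t| < σ := by
    have := Real.cosh_lt_cosh.1 hcosh_tσ
    rwa [abs_of_pos hσ0] at this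
  have hcosφpos : 0 < Real.cos φ := by
    by_contra h
    push_neg at h
    nlinarith [Real.one_le_cosh t, mul_nonpos_of_nonneg_of_nonpos (Real.cosh_pos σ).le h]
  have hφ1 : |φ| ≤ 1 := by
    by_contra h
    push_neg at h
    have h1 : Real.cos φ ≤ Real.cos 1 := by
      rw [← Real.cos_abs φ]
      exact Real.cos_le_cos_of_nonneg_of_le_pi (by norm_num) (Complex.abs_arg_le_pi ζ) h.le
    have h2 : Real.cos 1 ≤ 53 / 96 := by
      have hb := Real.cos_bound (x := 1) (by norm_num)
      have := (abs_sub_le_iff.1 hb).1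
      norm_num at this ⊢
      linarith
    have h3 : Real.cosh σ < 1.5430807 := by
      have hσc : Real.cosh σ < Real.cosh 1 := by
        rw [Real.cosh_lt_cosh, abs_of_pos hσ0, abs_one]; exact hσ1
      have e1 := Real.exp_one_lt_d9
      have e2 := Real.exp_one_gt_d9
      have hinv : Real.exp (-1) * Real.exp 1 = 1 := by rw [← Real.exp_add]; simp
      have hch : Real.cosh 1 = (Real.exp 1 + Real.exp (-1)) / 2 := Real.cosh_eq 1
      nlinarith [Real.exp_pos (-1), Real.exp_pos 1]
    have hcc : Real.cosh σ * Real.cos φ ≤ 1.5430807 * (53 / 96) := by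
      nlinarith [Real.cosh_pos σ]
    nlinarith [Real.one_le_cosh t]
  refine ⟨Complex.log ζ, ?_, Complex.exp_log hζne⟩
  rw [mem_ball_zero_iff]
  have hw2 : ‖Complex.log ζ‖ ^ 2 = t ^ 2 + φ ^ 2 := by
    rw [Complex.sq_norm, Complex.normSq_apply, Complex.log_re, Complex.log_im]; ring
  have hmain : t ^ 2 + φ ^ 2 < σ ^ 2 := by
    by_contra h
    push_neg at h
    have habs : Real.cosh σ * Real.cos φ ≤ Real.cosh |t| := by
      apply aux_key (abs_nonneg t) ht.le hσ1.le hφ1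
      rwa [sq_abs]
    rw [Real.cosh_abs] at habs
    linarith
  apply lt_of_pow_lt_pow_left₀ 2 hσ0.le
  rw [hw2]; exact hmain
end
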